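/- arXiv:1911.01714 — 8 statements merged into one kernel-verified Lean document; each statement's English description precedes it below -/
import Mathlib

section
/- Let φ, φ* be key polynomials for a valuation μ on K[x], and γ, γ* ∈ Λ∞ with μ(φ) < γ, μ(φ*) < γ*. Then the augmented valuations [μ; φ, γ] and [μ; φ*, γ*] coincide if and only if deg φ = deg φ*, γ = γ*, and μ(φ* − φ) ≥ γ. -/
open Polynomial Finset

variable {K : Type*} [Field K] {Λ : Type*} [AddCommGroup Λ] [LinearOrder Λ] [IsOrderedAddMonoid Λ]

/-- `v` is a valuation on the field `K` with values in `Λ∞ = WithTop Λ`. -/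
def IsVal (v : K → WithTop Λ) : Prop :=
  (∀ a, v a = ⊤ ↔ a = 0) ∧ v 1 = 0 ∧ (∀ a b, v (a * b) = v a + v b) ∧
    (∀ a b, min (v a) (v b) ≤ v (a + b))

/-- `μ` is a valuation on `K[x]` extending `v`. -/
def ExtVal (v : K → WithTop Λ) (μ : Polynomial K → WithTop Λ) : Prop :=
  (∀ f g, μ (f * g) = μ f + μ g) ∧ (∀ f g, min (μ f) (μ g) ≤ μ (f + g)) ∧
    (∀ a, μ (Polynomial.C a) = v a)

/-- `h` divides `g` μ-equivalently (`h ∣_μ g`): there is `q` with `μ(g - q h) > μ(g)`. -/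
def MuDvd (μ : Polynomial K → WithTop Λ) (h g : Polynomial K) : Prop :=
  ∃ q : Polynomial K, μ g < μ (g - q * h)

/-- `φ` is μ-minimal: `φ ∤_μ f` for every nonzero `f` of degree less than `deg φ`. -/
def MuMinimal (μ : Polynomial K → WithTop Λ) (φ : Polynomial K) : Prop :=
  ∀ f : Polynomial K, f ≠ 0 → f.degree < φ.degree → ¬ MuDvd μ φ f

/-- `φ` is μ-irreducible: the principal ideal generated by `in_μ φ` in the graded
algebra is a nonzero prime ideal (stated via μ-divisibility). -/
def MuIrreducible (μ : Polynomial K → WithTop Λ) (φ : Polynomial K) : Prop :=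
  μ φ ≠ ⊤ ∧ ¬ MuDvd μ φ 1 ∧
    ∀ f g : Polynomial K, MuDvd μ φ (f * g) → MuDvd μ φ f ∨ MuDvd μ φ g

/-- A (MacLane–Vaquié) key polynomial for `μ`. -/
def KeyPoly (μ : Polynomial K → WithTop Λ) (φ : Polynomial K) : Prop :=
  φ.Monic ∧ MuMinimal μ φ ∧ MuIrreducible μ φ

/-- `μ'` is the augmented valuation `[μ; φ, γ]`: on φ-expansions
`f = Σ a_s φ^s` (with `deg a_s < deg φ`), `μ' f = min_s (μ(a_s) + s·γ)`. -/
def AugVal (μ : Polynomial K → WithTop Λ) (φ : Polynomial K) (γ : WithTop Λ)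
    (μ' : Polynomial K → WithTop Λ) : Prop :=
  ∀ (f : Polynomial K) (n : ℕ) (a : ℕ → Polynomial K),
    (∀ s, (a s).degree < φ.degree) →
    f = ∑ s ∈ Finset.range n, a s * φ ^ s →
    μ' f = (Finset.range n).inf fun s => μ (a s) + s • γ

-- withtop helpers
lemma wt_add_self {a : WithTop Λ} (h : a + a = 0) : a = 0 := by
  cases a with
  | top => simp [top_add] at h
  | coe x =>
    rw [← WithTop.coe_add, ← WithTop.coe_zero, WithTop.coe_eq_coe] at h
    rw [← WithTop.coe_zero, WithTop.coe_eq_coe]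
    rcases lt_trichotomy x 0 with h1 | h1 | h1
    · exact absurd h (by have := add_lt_add h1 h1; simp at this; exact ne_of_lt (by simpa using this))
    · exact h1
    · exact absurd h (by have := add_lt_add h1 h1; simp at this; exact ne_of_gt (by simpa using this))

lemma wt_inf_add (a b c : WithTop Λ) : min a b + c = min (a + c) (b + c) :=
  (min_add_add_right a b c).symm

lemma inf_range_succ' (h : ℕ → WithTop Λ) (n : ℕ) :
    (range (n + 1)).inf h = min (h 0) ((range n).inf fun s => h (s + 1)) := by
  induction n with
  | zero => simp
  | succ n ih =>
    rw [Finset.range_add_one, Finset.inf_insert, ih, Finset.range_add_one, Finset.inf_insert]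
    rw [inf_comm (h (n+1)), inf_assoc]
    rw [inf_comm (h (n+1))]

lemma inf_add_const (F : ℕ → WithTop Λ) (c : WithTop Λ) (n : ℕ) :
    (range n).inf (fun s => F s + c) = (range n).inf F + c := by
  induction n with
  | zero => simp [top_add]
  | succ n ih =>
    rw [Finset.range_add_one, Finset.inf_insert, Finset.inf_insert, ih]
    exact min_add_add_right (F n) ((range n).inf F) c

section MuBasic
variable {v : K → WithTop Λ} {μ : Polynomial K → WithTop Λ}
variable (hv : IsVal v) (hμ : ExtVal v μ)
include hv hμ

lemma mu_zero : μ 0 = ⊤ := by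
  have h := hμ.2.2 0
  rw [Polynomial.C_0] at h
  rw [h, hv.1]

lemma mu_one : μ 1 = 0 := by
  have h := hμ.2.2 1
  rw [Polynomial.C_1] at h
  rw [h, hv.2.1]

lemma mu_neg (f : Polynomial K) : μ (-f) = μ f := by
  have hm1 : v (-1) = 0 := by
    apply wt_add_self
    rw [← hv.2.2.1, neg_one_mul, neg_neg, hv.2.1]
  have : μ (-f) = μ (Polynomial.C (-1) * f) := by rw [map_neg, Polynomial.C_1, neg_one_mul]
  rw [this, hμ.1, hμ.2.2, hm1, zero_add]

lemma mu_sub (f g : Polynomial K) : min (μ f) (μ g) ≤ μ (f - g) := by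
  rw [sub_eq_add_neg]
  have := hμ.2.1 f (-g)
  rwa [mu_neg hv hμ] at this

end MuBasic

/-- Every polynomial has a φ-expansion. -/
lemma exists_expansion {φ : Polynomial K} (hm : φ.Monic) (h0 : 0 < φ.degree) :
    ∀ (N : ℕ) (f : Polynomial K), f.natDegree ≤ N →
      ∃ (n : ℕ) (a : ℕ → Polynomial K), (∀ s, (a s).degree < φ.degree) ∧
        f = ∑ s ∈ range n, a s * φ ^ s := by
  intro N
  induction N with
  | zero =>
      intro f hf
      refine ⟨1, fun _ => f, fun _ => ?_, by simp⟩
      calc f.degree ≤ (f.natDegree : WithBot ℕ) := degree_le_natDegree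
        _ ≤ (0 : WithBot ℕ) := by exact_mod_cast hf
        _ < φ.degree := h0
  | succ N ih =>
      intro f hf
      by_cases hd : f.degree < φ.degree
      · exact ⟨1, fun _ => f, fun _ => hd, by simp⟩
      · have hφ1 : 1 ≤ φ.natDegree := natDegree_pos_iff_degree_pos.mpr h0
        have hq : (f /ₘ φ).natDegree ≤ N := by
          rw [natDegree_divByMonic f hm]
          omega
        obtain ⟨m, b, hb, hbe⟩ := ih (f /ₘ φ) hq
        refine ⟨m + 1, fun s => Nat.casesOn s (f %ₘ φ) b, ?_, ?_⟩
        · intro s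
          cases s with
          | zero => exact degree_modByMonic_lt f hm
          | succ t => exact hb t
        · rw [Finset.sum_range_succ']
          simp only []
          have : ∑ s ∈ range m, b s * φ ^ (s + 1) = φ * ∑ s ∈ range m, b s * φ ^ s := by
            rw [Finset.mul_sum]
            exact Finset.sum_congr rfl fun s _ => by ring
          rw [this, ← hbe, pow_zero, mul_one]
          show f = φ * (f /ₘ φ) + f %ₘ φ
          rw [add_comm]
          exact (modByMonic_add_div f φ).symm

lemma expansion_pad {φ f : Polynomial K} {n N : ℕ} {a : ℕ → Polynomial K}
    (hnN : n ≤ N) (hae : f = ∑ s ∈ range n, a s * φ ^ s) :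
    f = ∑ s ∈ range N, (if s < n then a s else 0) * φ ^ s := by
  rw [hae, ← Finset.sum_subset (Finset.range_subset_range.mpr hnN)
      (fun x _ hx => by rw [if_neg (by simpa using hx), zero_mul])]
  exact Finset.sum_congr rfl fun s hs => by rw [if_pos (Finset.mem_range.mp hs)]

/-- Consequence of μ-minimality: `μ(φq + r) = min(μφ + μq, μr)` for `deg r < deg φ`. -/
lemma muMin_eval {v : K → WithTop Λ} {μ : Polynomial K → WithTop Λ}
    (hv : IsVal v) (hμ : ExtVal v μ) {φ : Polynomial K} (hmin : MuMinimal μ φ)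
    (q r : Polynomial K) (hd : r.degree < φ.degree) :
    μ (φ * q + r) = min (μ φ + μ q) (μ r) := by
  by_cases hr : r = 0
  · rw [hr, add_zero, hμ.1, mu_zero hv hμ, min_eq_left le_top]
  · have hnd := hmin r hr hd
    rw [MuDvd] at hnd; push_neg at hnd
    have h1 : μ (φ * q + r) ≤ μ r := by
      have h := hnd (-q)
      have heq : r - (-q) * φ = φ * q + r := by ring
      rwa [heq] at h
    have h3 : μ (φ * q + r) ≤ μ φ + μ q := by
      rw [← hμ.1]
      have h4 := mu_sub hv hμ (φ * q + r) r
      rw [add_sub_cancel_right, min_eq_left h1] at h4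
      exact h4
    refine le_antisymm (le_min h3 h1) ?_
    have := hμ.2.1 (φ * q) r
    rwa [hμ.1] at this

lemma deg_zero_lt {φ : Polynomial K} (h0 : 0 < φ.degree) :
    (0 : Polynomial K).degree < φ.degree := by
  rw [degree_zero]; exact bot_le.trans_lt h0

set_option linter.unusedSectionVars false

section Aug
variable {v : K → WithTop Λ} {μ μ' : Polynomial K → WithTop Λ} {φ : Polynomial K} {γ : WithTop Λ}
variable (hv : IsVal v) (hμ : ExtVal v μ) (hm : φ.Monic) (h0 : 0 < φ.degree)
  (ha : AugVal μ φ γ μ')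

include h0 ha in
lemma aug_zero : μ' 0 = ⊤ := by
  have := ha 0 0 (fun _ => 0) (fun _ => deg_zero_lt h0) (by simp)
  simpa using this

include ha in
lemma aug_low {f : Polynomial K} (hd : f.degree < φ.degree) : μ' f = μ f := by
  have := ha f 1 (fun _ => f) (fun _ => hd) (by simp)
  simpa using this

include hv hμ h0 ha in
lemma aug_pair {c d : Polynomial K} (hc : c.degree < φ.degree) (hdd : d.degree < φ.degree) :
    μ' (c + d * φ) = min (μ c) (μ d + γ) := by
  have := ha (c + d * φ) 2 (fun s => if s = 0 then c else d)
      (fun s => by by_cases h : s = 0 <;> simp [h, hc, hdd])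
      (by simp [Finset.sum_range_succ])
  rw [this]
  rw [show range 2 = {0, 1} by rfl]
  simp [Finset.inf_insert]

include hv hμ hm h0 ha in
lemma aug_phi : μ' φ = γ := by
  have := aug_pair hv hμ h0 ha (c := 0) (d := 1) (deg_zero_lt h0)
      (by rw [degree_one]; exact h0)
  rw [zero_add, one_mul] at this
  rw [this, mu_zero hv hμ, mu_one hv hμ, zero_add, min_eq_right le_top]

include hm h0 ha in
lemma aug_shift {c : Polynomial K} (g : Polynomial K) (hc : c.degree < φ.degree) :
    μ' (c + φ * g) = min (μ c) (γ + μ' g) := by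
  obtain ⟨n, b, hb, hbe⟩ := exists_expansion hm h0 g.natDegree g le_rfl
  have hg := ha g n b hb hbe
  have hsum : c + φ * g = ∑ s ∈ range (n + 1), (Nat.casesOn s c b : Polynomial K) * φ ^ s := by
    rw [Finset.sum_range_succ']
    have : ∑ s ∈ range n, (b s) * φ ^ (s + 1) = φ * ∑ s ∈ range n, b s * φ ^ s := by
      rw [Finset.mul_sum]; exact Finset.sum_congr rfl fun s _ => by ring
    rw [this, ← hbe, pow_zero, mul_one, add_comm]
    rfl
  have hval := ha (c + φ * g) (n + 1) (fun s => Nat.casesOn s c b)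
      (fun s => by cases s with
        | zero => exact hc
        | succ t => exact hb t) (by rw [hsum])
  rw [hval, inf_range_succ']
  congr 1
  · simp
  · rw [hg, add_comm γ, ← inf_add_const]
    exact Finset.inf_congr rfl fun s _ => by
      rw [succ_nsmul, ← add_assoc]

include hμ hm h0 ha in
lemma aug_add (f g : Polynomial K) : min (μ' f) (μ' g) ≤ μ' (f + g) := by
  obtain ⟨n, a, hadeg, hae⟩ := exists_expansion hm h0 f.natDegree f le_rfl
  obtain ⟨m, b, hbdeg, hbe⟩ := exists_expansion hm h0 g.natDegree g le_rfl
  set N := max n m with hN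
  set a' : ℕ → Polynomial K := fun s => if s < n then a s else 0 with ha'
  set b' : ℕ → Polynomial K := fun s => if s < m then b s else 0 with hb'
  have hadeg' : ∀ s, (a' s).degree < φ.degree := fun s => by
    by_cases h : s < n
    · simpa [ha', h] using hadeg s
    · simpa [ha', h] using deg_zero_lt h0
  have hbdeg' : ∀ s, (b' s).degree < φ.degree := fun s => by
    by_cases h : s < m
    · simpa [hb', h] using hbdeg s
    · simpa [hb', h] using deg_zero_lt h0
  have hf' := ha f N a' hadeg' (expansion_pad (le_max_left n m) hae)
  have hg' := ha g N b' hbdeg' (expansion_pad (le_max_right n m) hbe)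
  have hsum := ha (f + g) N (fun s => a' s + b' s)
      (fun s => lt_of_le_of_lt (degree_add_le _ _) (max_lt (hadeg' s) (hbdeg' s)))
      (by rw [expansion_pad (le_max_left n m) hae, expansion_pad (le_max_right n m) hbe,
              ← Finset.sum_add_distrib]
          exact Finset.sum_congr rfl fun s _ => by ring)
  rw [hsum, hf', hg']
  refine Finset.le_inf fun s hs => ?_
  calc min ((range N).inf fun t => μ (a' t) + t • γ) ((range N).inf fun t => μ (b' t) + t • γ)
      ≤ min (μ (a' s) + s • γ) (μ (b' s) + s • γ) :=
        min_le_min (Finset.inf_le hs) (Finset.inf_le hs)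
    _ = min (μ (a' s)) (μ (b' s)) + s • γ := min_add_add_right _ _ _
    _ ≤ μ (a' s + b' s) + s • γ := add_le_add_left (hμ.2.1 _ _) _

include hv hμ hm h0 ha in
lemma aug_neg (f : Polynomial K) : μ' (-f) = μ' f := by
  obtain ⟨n, a, hadeg, hae⟩ := exists_expansion hm h0 f.natDegree f le_rfl
  have h1 := ha f n a hadeg hae
  have h2 := ha (-f) n (fun s => -(a s)) (fun s => by rw [degree_neg]; exact hadeg s)
      (by rw [hae, ← Finset.sum_neg_distrib]
          exact Finset.sum_congr rfl fun s _ => by ring)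
  rw [h1, h2]
  exact Finset.inf_congr rfl fun s _ => by rw [mu_neg hv hμ]

include hv hμ hm h0 ha in
lemma aug_sub (f g : Polynomial K) : min (μ' f) (μ' g) ≤ μ' (f - g) := by
  have := aug_add hμ hm h0 ha f (-g)
  rwa [aug_neg hv hμ hm h0 ha, ← sub_eq_add_neg] at this

include hv hμ hm h0 ha in
lemma aug_smallmul (hmin : MuMinimal μ φ) (hγφ : μ φ ≤ γ) {c : Polynomial K}
    (hc : c.degree < φ.degree) (g : Polynomial K) : μ c + μ' g ≤ μ' (c * g) := by
  have hφ0 : φ ≠ 0 := hm.ne_zero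
  obtain ⟨n, b, hb, hbe⟩ := exists_expansion hm h0 g.natDegree g le_rfl
  have hg := ha g n b hb hbe
  set q : ℕ → Polynomial K := fun s => (c * b s) /ₘ φ with hqdef
  set r : ℕ → Polynomial K := fun s => (c * b s) %ₘ φ with hrdef
  have hqr : ∀ s, c * b s = φ * q s + r s := fun s => by
    rw [add_comm]; exact (modByMonic_add_div _ φ).symm
  have hrdeg : ∀ s, (r s).degree < φ.degree := fun s => degree_modByMonic_lt _ hm
  have hqdeg : ∀ s, (q s).degree < φ.degree := by
    intro s
    by_cases hq0 : q s = 0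
    · rw [hq0]; exact deg_zero_lt h0
    · have hcb0 : c * b s ≠ 0 := by
        intro h
        rw [hqdef] at hq0; apply hq0; simp only [h, zero_divByMonic]
      have hc0 : c ≠ 0 := fun h => hcb0 (by rw [h, zero_mul])
      have hb0 : b s ≠ 0 := fun h => hcb0 (by rw [h, mul_zero])
      have h1 : c.natDegree < φ.natDegree := natDegree_lt_natDegree hc0 hc
      have h2 : (b s).natDegree < φ.natDegree := natDegree_lt_natDegree hb0 (hb s)
      have h3 : (q s).natDegree = (c * b s).natDegree - φ.natDegree :=
        natDegree_divByMonic _ hm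
      have h4 : (c * b s).natDegree ≤ c.natDegree + (b s).natDegree := natDegree_mul_le
      rw [degree_eq_natDegree hq0, degree_eq_natDegree hφ0]
      exact_mod_cast by omega
  -- value bounds
  have hrs : ∀ s, μ c + μ (b s) ≤ μ (r s) := fun s => by
    have := muMin_eval hv hμ hmin (q s) (r s) (hrdeg s)
    rw [← hqr s, hμ.1] at this
    rw [this] at *
    exact min_le_right _ _
  have hqs : ∀ s, μ c + μ (b s) ≤ μ φ + μ (q s) := fun s => by
    have := muMin_eval hv hμ hmin (q s) (r s) (hrdeg s)
    rw [← hqr s, hμ.1] at this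
    rw [this]
    exact min_le_left _ _
  set A : ℕ → Polynomial K :=
    fun t => (if t < n then r t else 0) + (Nat.casesOn t 0 fun t' => q t') with hA
  have hAdeg : ∀ t, (A t).degree < φ.degree := by
    intro t
    refine lt_of_le_of_lt (degree_add_le _ _) (max_lt ?_ ?_)
    · by_cases h : t < n
      · simpa [hA, h] using hrdeg t
      · simpa [hA, h] using deg_zero_lt h0
    · cases t with
      | zero => exact deg_zero_lt h0
      | succ t' => exact hqdeg t'
  have hsum : c * g = ∑ t ∈ range (n + 1), A t * φ ^ t := by
    have e1 : c * g = ∑ s ∈ range n, (φ * q s + r s) * φ ^ s := by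
      rw [hbe, Finset.mul_sum]
      exact Finset.sum_congr rfl fun s _ => by rw [← mul_assoc, hqr s]
    have e2 : ∑ t ∈ range (n + 1), A t * φ ^ t =
        (∑ t ∈ range (n + 1), (if t < n then r t else 0) * φ ^ t) +
        ∑ t ∈ range (n + 1), ((Nat.casesOn t 0 fun t' => q t' : Polynomial K)) * φ ^ t := by
      rw [← Finset.sum_add_distrib]
      exact Finset.sum_congr rfl fun t _ => by rw [hA]; ring
    have e3 : (∑ t ∈ range (n + 1), (if t < n then r t else 0) * φ ^ t) =
        ∑ t ∈ range n, r t * φ ^ t :=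
      ((expansion_pad (Nat.le_succ n) rfl).symm : _)
    have e4 : ∑ t ∈ range (n + 1), ((Nat.casesOn t 0 fun t' => q t' : Polynomial K)) * φ ^ t =
        ∑ t ∈ range n, q t * φ ^ (t + 1) := by
      rw [Finset.sum_range_succ']
      simp
    rw [e2, e3, e4, e1, ← Finset.sum_add_distrib]
    exact Finset.sum_congr rfl fun s _ => by ring
  have hval := ha (c * g) (n + 1) A hAdeg hsum
  rw [hval, hg]
  refine Finset.le_inf fun t ht => ?_
  have hmin2 : min (μ (if t < n then r t else 0)) (μ (Nat.casesOn t 0 fun t' => q t')) ≤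
      μ (A t) := hμ.2.1 _ _
  have step : min (μ (if t < n then r t else 0) + t • γ)
      (μ (Nat.casesOn t 0 fun t' => q t') + t • γ) ≤ μ (A t) + t • γ := by
    rw [min_add_add_right]; exact add_le_add_left hmin2 _
  refine le_trans (le_min ?_ ?_) step
  · by_cases h : t < n
    · rw [if_pos h]
      calc μ c + (range n).inf (fun s => μ (b s) + s • γ) ≤ μ c + (μ (b t) + t • γ) :=
            add_le_add_right (Finset.inf_le (Finset.mem_range.mpr h)) _
        _ = (μ c + μ (b t)) + t • γ := by rw [add_assoc]
        _ ≤ μ (r t) + t • γ := add_le_add_left (hrs t) _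
    · rw [if_neg h, mu_zero hv hμ, top_add]; exact le_top
  · cases t with
    | zero =>
        rw [show (Nat.casesOn 0 0 fun t' => q t' : Polynomial K) = 0 from rfl,
          mu_zero hv hμ, top_add]
        exact le_top
    | succ t' =>
        have ht' : t' < n := Nat.lt_of_succ_lt_succ (Finset.mem_range.mp ht)
        show μ c + _ ≤ μ (q t') + (t' + 1) • γ
        calc μ c + (range n).inf (fun s => μ (b s) + s • γ) ≤ μ c + (μ (b t') + t' • γ) :=
              add_le_add_right (Finset.inf_le (Finset.mem_range.mpr ht')) _
          _ = (μ c + μ (b t')) + t' • γ := by rw [add_assoc]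
          _ ≤ (μ φ + μ (q t')) + t' • γ := add_le_add_left (hqs t') _
          _ ≤ (γ + μ (q t')) + t' • γ := add_le_add_left (add_le_add_left hγφ _) _
          _ = μ (q t') + (t' + 1) • γ := by
              rw [succ_nsmul, add_comm γ (μ (q t')), add_assoc, add_comm γ (t' • γ)]

include hv hμ hm h0 ha in
lemma aug_genshift (c g : Polynomial K) : min (μ' c) (γ + μ' g) ≤ μ' (c + φ * g) := by
  obtain ⟨n, a, hadeg, hae⟩ := exists_expansion hm h0 c.natDegree c le_rfl
  obtain ⟨m, b, hbdeg, hbe⟩ := exists_expansion hm h0 g.natDegree g le_rfl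
  set N := max n m with hN
  set a' : ℕ → Polynomial K := fun s => if s < n then a s else 0 with ha'
  set b' : ℕ → Polynomial K := fun s => if s < m then b s else 0 with hb'
  have hadeg' : ∀ s, (a' s).degree < φ.degree := fun s => by
    by_cases h : s < n
    · simpa [ha', h] using hadeg s
    · simpa [ha', h] using deg_zero_lt h0
  have hbdeg' : ∀ s, (b' s).degree < φ.degree := fun s => by
    by_cases h : s < m
    · simpa [hb', h] using hbdeg s
    · simpa [hb', h] using deg_zero_lt h0
  have hc' := ha c N a' hadeg' (expansion_pad (le_max_left n m) hae)
  have hg' := ha g N b' hbdeg' (expansion_pad (le_max_right n m) hbe)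
  set A : ℕ → Polynomial K := fun t => a' t + (Nat.casesOn t 0 fun t' => b' t') with hA
  have hAdeg : ∀ t, (A t).degree < φ.degree := by
    intro t
    refine lt_of_le_of_lt (degree_add_le _ _) (max_lt (hadeg' t) ?_)
    cases t with
    | zero => exact deg_zero_lt h0
    | succ t' => exact hbdeg' t'
  have hsum : c + φ * g = ∑ t ∈ range (N + 1), A t * φ ^ t := by
    have e2 : ∑ t ∈ range (N + 1), A t * φ ^ t =
        (∑ t ∈ range (N + 1), a' t * φ ^ t) +
        ∑ t ∈ range (N + 1), ((Nat.casesOn t 0 fun t' => b' t' : Polynomial K)) * φ ^ t := by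
      rw [← Finset.sum_add_distrib]
      exact Finset.sum_congr rfl fun t _ => by rw [hA]; ring
    have e3 : (∑ t ∈ range (N + 1), a' t * φ ^ t) = c :=
      (expansion_pad (le_trans (le_max_left n m) (Nat.le_succ N)) hae).symm
    have e4 : ∑ t ∈ range (N + 1), ((Nat.casesOn t 0 fun t' => b' t' : Polynomial K)) * φ ^ t =
        φ * g := by
      rw [Finset.sum_range_succ']
      have : ∑ s ∈ range N, b' s * φ ^ (s + 1) = φ * ∑ s ∈ range N, b' s * φ ^ s := by
        rw [Finset.mul_sum]; exact Finset.sum_congr rfl fun s _ => by ring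
      simp only []
      rw [this, ← expansion_pad (le_max_right n m) hbe]
      simp
    rw [e2, e3, e4]
  have hval := ha (c + φ * g) (N + 1) A hAdeg hsum
  rw [hval, hc', hg']
  refine Finset.le_inf fun t ht => ?_
  have hmin2 : min (μ (a' t)) (μ (Nat.casesOn t 0 fun t' => b' t')) ≤ μ (A t) := hμ.2.1 _ _
  have step : min (μ (a' t) + t • γ) (μ (Nat.casesOn t 0 fun t' => b' t') + t • γ) ≤
      μ (A t) + t • γ := by
    rw [min_add_add_right]; exact add_le_add_left hmin2 _
  refine le_trans (le_min ?_ ?_) step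
  · refine min_le_of_left_le ?_
    by_cases h : t < N
    · exact Finset.inf_le (Finset.mem_range.mpr h)
    · have ht2 := Finset.mem_range.mp ht
      have h1 : n ≤ N := le_max_left n m
      have htn : ¬ t < n := by omega
      rw [ha']
      simp only [if_neg htn]
      rw [mu_zero hv hμ, top_add]
      exact le_top
  · refine min_le_of_right_le ?_
    cases t with
    | zero =>
        rw [show (Nat.casesOn 0 0 fun t' => b' t' : Polynomial K) = 0 from rfl,
          mu_zero hv hμ, top_add]
        exact le_top
    | succ t' =>
        have ht' : t' < N := Nat.lt_of_succ_lt_succ (Finset.mem_range.mp ht)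
        show γ + _ ≤ μ (b' t') + (t' + 1) • γ
        calc γ + (range N).inf (fun s => μ (b' s) + s • γ) ≤ γ + (μ (b' t') + t' • γ) :=
              add_le_add_right (Finset.inf_le (Finset.mem_range.mpr ht')) _
          _ = μ (b' t') + (t' + 1) • γ := by
              rw [succ_nsmul, ← add_assoc, add_comm γ (μ (b' t')), add_assoc,
                add_comm γ (t' • γ), ← add_assoc]

end Aug

lemma aug_le_aug {v : K → WithTop Λ} {μ μ' μs' : Polynomial K → WithTop Λ}
    {φ φs : Polynomial K} {γ : WithTop Λ}
    (hv : IsVal v) (hμ : ExtVal v μ)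
    (hφm : φ.Monic) (hφsm : φs.Monic) (h0 : 0 < φ.degree) (hdeg : φ.degree = φs.degree)
    (hmins : MuMinimal μ φs) (hγφs : μ φs ≤ γ) (hδ : γ ≤ μ (φs - φ))
    (ha : AugVal μ φ γ μ') (has : AugVal μ φs γ μs') :
    ∀ f, μ' f ≤ μs' f := by
  have h0s : 0 < φs.degree := hdeg ▸ h0
  have hδdeg : (φs - φ).degree < φs.degree :=
    degree_sub_lt hdeg.symm hφsm.ne_zero (hφsm.leadingCoeff.trans hφm.leadingCoeff.symm)
  suffices H : ∀ (N : ℕ) (f : Polynomial K), f.natDegree ≤ N → μ' f ≤ μs' f from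
    fun f => H f.natDegree f le_rfl
  intro N
  induction N using Nat.strong_induction_on with
  | _ N ih =>
  intro f hfN
  by_cases hd : f.degree < φ.degree
  · rw [aug_low ha hd, aug_low has (hdeg ▸ hd)]
  · have hf0 : f ≠ 0 := by
      intro h; apply hd; rw [h]; exact deg_zero_lt h0
    set g := f /ₘ φ with hgdef
    set c := f %ₘ φ with hcdef
    have hcdeg : c.degree < φ.degree := degree_modByMonic_lt f hφm
    have hfe : f = c + φ * g := (modByMonic_add_div f φ).symm
    have hg0 : g ≠ 0 := by
      intro h
      apply hd
      rw [hfe, h, mul_zero, add_zero]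
      exact hcdeg
    have hglt : g.natDegree < N :=
      lt_of_lt_of_le (natDegree_lt_natDegree hg0 (degree_divByMonic_lt f φ hf0 h0)) hfN
    have hIH : μ' g ≤ μs' g := ih g.natDegree hglt g le_rfl
    have h1 : μ' f = min (μ c) (γ + μ' g) := by rw [hfe]; exact aug_shift hφm h0 ha g hcdeg
    have hfe2 : f = (c - (φs - φ) * g) + φs * g := by rw [hfe]; ring
    have h2 : min (μs' (c - (φs - φ) * g)) (γ + μs' g) ≤ μs' f := by
      rw [hfe2]; exact aug_genshift hv hμ hφsm h0s has _ g
    have h3 : min (μs' c) (μs' ((φs - φ) * g)) ≤ μs' (c - (φs - φ) * g) :=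
      aug_sub hv hμ hφsm h0s has _ _
    have h4 : μ (φs - φ) + μs' g ≤ μs' ((φs - φ) * g) :=
      aug_smallmul hv hμ hφsm h0s has hmins hγφs hδdeg g
    have h5 : γ + μs' g ≤ μs' ((φs - φ) * g) :=
      le_trans (add_le_add_left hδ _) h4
    have h6 : μs' c = μ c := aug_low has (hdeg ▸ hcdeg)
    rw [h1]
    have h8 : min (μ c) (γ + μs' g) ≤ μs' (c - (φs - φ) * g) := by
      refine le_trans ?_ h3
      rw [h6]
      exact min_le_min le_rfl h5
    have h7 : min (μ c) (γ + μs' g) ≤ μs' f :=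
      le_trans (le_min h8 (min_le_right _ _)) h2
    exact le_trans (min_le_min le_rfl (add_le_add_right hIH _)) h7

lemma keypoly_deg_pos {v : K → WithTop Λ} {μ : Polynomial K → WithTop Λ}
    (hv : IsVal v) (hμ : ExtVal v μ) {φ : Polynomial K} (hk : KeyPoly μ φ) :
    0 < φ.degree := by
  by_contra h
  push_neg at h
  have h1 : φ = 1 := eq_one_of_monic_natDegree_zero hk.1
    (natDegree_eq_zero_iff_degree_le_zero.mpr h)
  refine hk.2.2.2.1 ⟨1, ?_⟩
  rw [h1, one_mul, sub_self, mu_zero hv hμ, mu_one hv hμ]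
  exact lt_top_iff_ne_top.mpr (by simp)


/-- `[μ; φ, γ] = [μ; φ*, γ*]` iff `deg φ = deg φ*`, `γ = γ*` and
`μ(φ* − φ) ≥ γ`. -/
theorem unicity_ordinary_augmentation (v : K → WithTop Λ)
    (μ : Polynomial K → WithTop Λ) (hv : IsVal v) (hμ : ExtVal v μ)
    (hsupp : ∀ f : Polynomial K, f ≠ 0 → μ f ≠ ⊤)
    (φ φs : Polynomial K) (hφ : KeyPoly μ φ) (hφs : KeyPoly μ φs)
    (γ γs : WithTop Λ) (hγ : μ φ < γ) (hγs : μ φs < γs)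
    (μ' μs' : Polynomial K → WithTop Λ)
    (haug : AugVal μ φ γ μ') (haugs : AugVal μ φs γs μs') :
    μ' = μs' ↔ (φ.degree = φs.degree ∧ γ = γs ∧ γ ≤ μ (φs - φ)) := by

  have h0 : 0 < φ.degree := keypoly_deg_pos hv hμ hφ
  have h0s : 0 < φs.degree := keypoly_deg_pos hv hμ hφs
  have hnegeq : μ (φ - φs) = μ (φs - φ) := by rw [← neg_sub, mu_neg hv hμ]
  constructor
  · intro h
    have hdeg : φ.degree = φs.degree := by
      rcases lt_trichotomy φ.degree φs.degree with hl | he | hl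
      · exfalso
        have e1 : μs' φ = μ φ := aug_low haugs hl
        have e2 : μ' φ = γ := aug_phi hv hμ hφ.1 h0 haug
        rw [h, e1] at e2
        exact absurd e2 (ne_of_lt hγ)
      · exact he
      · exfalso
        have e1 : μ' φs = μ φs := aug_low haug hl
        have e2 : μs' φs = γs := aug_phi hv hμ hφs.1 h0s haugs
        rw [← h, e1] at e2
        exact absurd e2 (ne_of_lt hγs)
    have hδdeg : (φs - φ).degree < φ.degree := by
      rw [hdeg]
      exact degree_sub_lt hdeg.symm hφs.1.ne_zero
        (hφs.1.leadingCoeff.trans hφ.1.leadingCoeff.symm)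
    have hδdeg' : (φ - φs).degree < φs.degree := by
      rw [← hdeg]
      exact degree_sub_lt hdeg hφ.1.ne_zero (hφ.1.leadingCoeff.trans hφs.1.leadingCoeff.symm)
    have hA : μ' φs = min (μ (φs - φ)) γ := by
      have := aug_pair hv hμ h0 haug (c := φs - φ) (d := 1) hδdeg
        (by rw [degree_one]; exact h0)
      rw [one_mul, sub_add_cancel] at this
      rw [this, mu_one hv hμ, zero_add]
    have hB : μs' φs = γs := aug_phi hv hμ hφs.1 h0s haugs
    have hC : μ' φ = γ := aug_phi hv hμ hφ.1 h0 haug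
    have hD : μs' φ = min (μ (φs - φ)) γs := by
      have := aug_pair hv hμ h0s haugs (c := φ - φs) (d := 1) hδdeg'
        (by rw [degree_one]; exact h0s)
      rw [one_mul, sub_add_cancel] at this
      rw [this, mu_one hv hμ, zero_add, hnegeq]
    have e1 : min (μ (φs - φ)) γ = γs := by rw [← hA, h, hB]
    have e2 : γ = min (μ (φs - φ)) γs := by rw [← hD, ← h, hC]
    rcases lt_or_ge (μ (φs - φ)) γ with hlt | hge
    · exfalso
      have eγs : γs = μ (φs - φ) := by rw [← e1, min_eq_left hlt.le]
      rw [eγs, min_self] at e2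
      exact absurd e2.symm (ne_of_lt hlt)
    · have hγγs : γ = γs := by rw [← e1, min_eq_right hge]
      exact ⟨hdeg, hγγs, hge⟩
  · rintro ⟨hdeg, hγeq, hge⟩
    subst hγeq
    funext f
    refine le_antisymm ?_ ?_
    · exact aug_le_aug hv hμ hφ.1 hφs.1 h0 hdeg hφs.2.1 hγs.le hge haug haugs f
    · exact aug_le_aug hv hμ hφs.1 hφ.1 h0s hdeg.symm hφ.2.1 hγ.le
        (by rw [hnegeq]; exact hge) haugs haug f
end

section
/- (Sufficiency direction of unicity of ordinary augmentation) Let φ be a key polynomial for μ and φ* = φ + a with deg a < deg φ. If μ(a) ≥ γ for some γ ∈ Λ∞ with γ > μ(φ), then φ* is also monic of the same degree and the augmented valuations [μ; φ, γ] and [μ; φ*, γ] are equal. -/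
open Polynomial Finset

variable {K : Type*} [Field K] {Λ : Type*} [AddCommGroup Λ] [LinearOrder Λ] [IsOrderedAddMonoid Λ]

variable {v : K → WithTop Λ} {μ : Polynomial K → WithTop Λ}

lemma muZero (hv : IsVal v) (hμ : ExtVal v μ) : μ (0 : Polynomial K) = ⊤ := by
  have h := hμ.2.2 0
  rw [Polynomial.C_0] at h
  rw [h, (hv.1 0).2 rfl]

lemma muNeg (hv : IsVal v) (hμ : ExtVal v μ) (f : Polynomial K) : μ (-f) = μ f := by
  have hneg1 : v (-1 : K) = 0 := by
    have h2 : v ((-1 : K) * (-1)) = v (-1) + v (-1) := hv.2.2.1 _ _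
    rw [neg_mul_neg, one_mul, hv.2.1] at h2
    rcases (eq_or_ne (v (-1 : K)) ⊤) with h | h
    · rw [h] at h2; simp at h2
    · lift v (-1 : K) to Λ using h with x
      rw [← WithTop.coe_add] at h2
      have hx : x + x = 0 := by exact_mod_cast h2.symm
      have : x = 0 := by
        rcases lt_trichotomy x 0 with h' | h' | h'
        · exact absurd hx (ne_of_lt (by simpa using add_lt_add h' h'))
        · exact h'
        · exact absurd hx (ne_of_gt (by simpa using add_lt_add h' h'))
      rw [this]; rfl
  have : -f = Polynomial.C (-1) * f := by rw [map_neg, Polynomial.C_1, neg_one_mul]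
  rw [this, hμ.1, hμ.2.2, hneg1, zero_add]

lemma muAddOfLt (hv : IsVal v) (hμ : ExtVal v μ) {f g : Polynomial K}
    (h : μ f < μ g) : μ (f + g) = μ f := by
  apply le_antisymm
  · have h1 : min (μ (f + g)) (μ (-g)) ≤ μ (f + g + -g) := hμ.2.1 _ _
    rw [add_neg_cancel_right, muNeg hv hμ] at h1
    rcases min_le_iff.mp h1 with h2 | h2
    · exact h2
    · exact absurd h2 (not_le.mpr h)
  · have := hμ.2.1 f g
    rwa [min_eq_left h.le] at this

lemma muSumAdd (hv : IsVal v) (hμ : ExtVal v μ) {ι : Type*} [DecidableEq ι] (S : Finset ι)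
    (g : ι → Polynomial K) (t x : WithTop Λ)
    (h : ∀ i ∈ S, t ≤ μ (g i) + x) : t ≤ μ (∑ i ∈ S, g i) + x := by
  induction S using Finset.induction with
  | empty => simp [muZero hv hμ]
  | insert i S' hni ih =>
    rw [Finset.sum_insert hni]
    have h1 : min (μ (g i)) (μ (∑ j ∈ S', g j)) ≤ μ (g i + ∑ j ∈ S', g j) := hμ.2.1 _ _
    calc t ≤ min (μ (g i)) (μ (∑ j ∈ S', g j)) + x := by
            rw [← min_add_add_right]
            exact le_min (h i (Finset.mem_insert_self i S'))
              (ih fun j hj => h j (Finset.mem_insert_of_mem hj))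
      _ ≤ _ := add_le_add_left h1 x


lemma lemmaA (hv : IsVal v) (hμ : ExtVal v μ) {φ ψ : Polynomial K}
    (hmin : MuMinimal μ φ) (hφtop : μ φ ≠ ⊤) {γ : WithTop Λ} (hγ : μ φ < γ)
    (hψval : μ ψ = μ φ)
    (htrans : ∀ q r : Polynomial K, μ r = μ q + μ φ → μ r ≠ ⊤ →
      μ r < μ (r + q * ψ) → μ r < μ (r + q * φ)) :
    ∀ q r : Polynomial K, q.degree < φ.degree → r.degree < φ.degree →
      μ (q * ψ + r) ≤ min (μ r) (μ q + γ) := by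
  intro q r _hq hr
  have hqψ : μ (q * ψ) = μ q + μ φ := by rw [hμ.1, hψval]
  have hler : μ (q*ψ) = ⊤ → μ (q*ψ + r) ≤ μ r := by
    intro ht
    have he : q*ψ + r + -(q*ψ) = r := by ring
    have h1 := hμ.2.1 (q*ψ + r) (-(q*ψ))
    rw [he, muNeg hv hμ, ht, inf_top_eq] at h1
    exact h1
  by_cases hqt : μ q = ⊤
  · have ht : μ (q*ψ) = ⊤ := by rw [hqψ, hqt, top_add]
    have : μ q + γ = ⊤ := by rw [hqt, top_add]
    rw [this, inf_top_eq]
    exact hler ht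
  · have hlt : μ (q*ψ) < μ q + γ := by rw [hqψ]; exact WithTop.add_lt_add_left hqt hγ
    have hne : μ (q*ψ) ≠ ⊤ := by rw [hqψ]; exact WithTop.add_ne_top.mpr ⟨hqt, hφtop⟩
    rcases lt_trichotomy (μ (q*ψ)) (μ r) with h | h | h
    · rw [muAddOfLt hv hμ h]
      exact le_min h.le hlt.le
    · have hminr : min (μ r) (μ q + γ) = μ r := min_eq_left (h ▸ hlt.le)
      rw [hminr]
      by_contra h'
      push_neg at h'
      rw [add_comm] at h'
      have hreq : μ r = μ q + μ φ := h ▸ hqψ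
      have hrtop : μ r ≠ ⊤ := h ▸ hne
      have h2 := htrans q r hreq hrtop h'
      have hr0 : r ≠ 0 := fun h0 => hrtop (h0 ▸ muZero hv hμ)
      exact hmin r hr0 hr ⟨-q, by rwa [neg_mul, sub_neg_eq_add]⟩
    · have := muAddOfLt hv hμ h
      rw [add_comm] at this
      rw [this]
      exact le_min le_rfl (h.trans hlt).le

lemma muExpand (hv : IsVal v) (hμ : ExtVal v μ) {ψ e : Polynomial K} {γ : WithTop Λ}
    (hψm : ψ.Monic) (h0 : 0 < ψ.degree) (he : e.degree < ψ.degree) (hγe : γ ≤ μ e)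
    (hmin : ∀ q r : Polynomial K, q.degree < ψ.degree → r.degree < ψ.degree →
      μ (q * ψ + r) ≤ min (μ r) (μ q + γ)) :
    ∀ (s : ℕ) (b : Polynomial K), b.degree < ψ.degree →
      ∃ c : ℕ → Polynomial K, (∀ j, (c j).degree < ψ.degree) ∧
        (∀ j, s < j → c j = 0) ∧
        (b * (ψ + e) ^ s = ∑ j ∈ Finset.range (s+1), c j * ψ ^ j) ∧
        (∀ j, μ b + s • γ ≤ μ (c j) + j • γ) := by
  have hψ0 : ψ ≠ 0 := hψm.ne_zero
  have hbot : (0 : Polynomial K).degree < ψ.degree := by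
    rw [degree_zero]; exact lt_of_lt_of_le (WithBot.bot_lt_coe 0) h0.le
  intro s
  induction s with
  | zero =>
    intro b hb
    refine ⟨fun j => if j = 0 then b else 0, ?_, ?_, ?_, ?_⟩
    · intro j; by_cases hj : j = 0
      · show (if j = 0 then b else 0).degree < ψ.degree
        rw [if_pos hj]; exact hb
      · show (if j = 0 then b else 0).degree < ψ.degree
        rw [if_neg hj]; exact hbot
    · intro j hj; simp [Nat.pos_iff_ne_zero.mp hj]
    · simp
    · intro j; by_cases hj : j = 0
      · simp [hj]
      · simp only [hj, if_false, muZero hv hμ, top_add]; exact le_top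
  | succ s ih =>
    intro b hb
    obtain ⟨c, hcdeg, hcvan, hcsum, hcval⟩ := ih b hb
    set q : ℕ → Polynomial K := fun j => (c j * e) /ₘ ψ with hq
    set r : ℕ → Polynomial K := fun j => (c j * e) %ₘ ψ with hr
    have hdiv : ∀ j, c j * e = q j * ψ + r j := by
      intro j
      have h1 := modByMonic_add_div (c j * e) ψ
      calc c j * e = (c j * e) %ₘ ψ + ψ * ((c j * e) /ₘ ψ) := h1.symm
        _ = q j * ψ + r j := by rw [hq, hr]; ring
    have hrdeg : ∀ j, (r j).degree < ψ.degree := fun j => degree_modByMonic_lt _ hψm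
    have hqdeg : ∀ j, (q j).degree < ψ.degree := by
      intro j
      by_cases hce : c j * e = 0
      · show ((c j * e) /ₘ ψ).degree < ψ.degree
        rw [hce, zero_divByMonic]; exact hbot
      · have hcj : c j ≠ 0 := fun h => hce (by rw [h, zero_mul])
        have he0 : e ≠ 0 := fun h => hce (by rw [h, mul_zero])
        have h1 : (q j).natDegree = (c j * e).natDegree - ψ.natDegree :=
          natDegree_divByMonic _ hψm
        have h2 : (c j * e).natDegree = (c j).natDegree + e.natDegree :=
          natDegree_mul hcj he0
        have h3 : (c j).natDegree < ψ.natDegree := natDegree_lt_natDegree hcj (hcdeg j)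
        have h4 : e.natDegree < ψ.natDegree := natDegree_lt_natDegree he0 he
        have h5 : (q j).natDegree < ψ.natDegree := by omega
        calc (q j).degree ≤ ((q j).natDegree : WithBot ℕ) := degree_le_natDegree
          _ < (ψ.natDegree : WithBot ℕ) := by exact_mod_cast h5
          _ = ψ.degree := (degree_eq_natDegree hψ0).symm
    have hkey : ∀ j, μ (c j) + γ ≤ min (μ (r j)) (μ (q j) + γ) := by
      intro j
      have h1 := hmin (q j) (r j) (hqdeg j) (hrdeg j)
      rw [← hdiv j, hμ.1] at h1
      exact le_trans (add_le_add_right hγe _) h1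
    have hrval : ∀ j, μ (c j) + γ ≤ μ (r j) := fun j => (hkey j).trans (min_le_left _ _)
    have hqval : ∀ j, μ (c j) + γ ≤ μ (q j) + γ := fun j => (hkey j).trans (min_le_right _ _)
    refine ⟨fun i => r i + (if i = 0 then 0 else c (i-1) + q (i-1)), ?_, ?_, ?_, ?_⟩
    · intro i
      apply lt_of_le_of_lt (degree_add_le _ _)
      apply max_lt (hrdeg i)
      by_cases hi : i = 0
      · rw [if_pos hi]; simpa using hbot
      · simp only [hi, if_false]
        exact lt_of_le_of_lt (degree_add_le _ _) (max_lt (hcdeg _) (hqdeg _))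
    · intro i hi
      have hi0 : i ≠ 0 := by omega
      have hci : c i = 0 := hcvan i (by omega)
      have hci1 : c (i-1) = 0 := hcvan (i-1) (by omega)
      have hri : r i = 0 := by
        show (c i * e) %ₘ ψ = 0; rw [hci, zero_mul, zero_modByMonic]
      have hqi1 : q (i-1) = 0 := by
        show (c (i-1) * e) /ₘ ψ = 0; rw [hci1, zero_mul, zero_divByMonic]
      simp [hi0, hri, hci1, hqi1]
    · have hterm : ∀ j, c j * ψ ^ j * (ψ + e) = (c j + q j) * ψ ^ (j+1) + r j * ψ ^ j := by
        intro j
        have := hdiv j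
        ring_nf
        linear_combination (ψ ^ j) * (hdiv j)
      have hrs1 : r (s+1) = 0 := by
        show (c (s+1) * e) %ₘ ψ = 0
        rw [hcvan (s+1) (Nat.lt_succ_self s), zero_mul, zero_modByMonic]
      calc b * (ψ + e) ^ (s+1)
          = (b * (ψ + e) ^ s) * (ψ + e) := by ring
        _ = (∑ j ∈ Finset.range (s+1), c j * ψ ^ j) * (ψ + e) := by rw [hcsum]
        _ = ∑ j ∈ Finset.range (s+1), ((c j + q j) * ψ ^ (j+1) + r j * ψ ^ j) := by
            rw [Finset.sum_mul]; exact Finset.sum_congr rfl fun j _ => hterm j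
        _ = (∑ j ∈ Finset.range (s+1), (c j + q j) * ψ ^ (j+1))
              + ∑ j ∈ Finset.range (s+1), r j * ψ ^ j := Finset.sum_add_distrib
        _ = ∑ i ∈ Finset.range (s+2),
              (r i + (if i = 0 then 0 else c (i-1) + q (i-1))) * ψ ^ i := by
            have h1 : ∑ i ∈ Finset.range (s+2),
                (r i + (if i = 0 then 0 else c (i-1) + q (i-1))) * ψ ^ i
              = (∑ i ∈ Finset.range (s+2), r i * ψ ^ i)
                + ∑ i ∈ Finset.range (s+2),
                    (if i = 0 then 0 else c (i-1) + q (i-1)) * ψ ^ i := by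
              rw [← Finset.sum_add_distrib]
              exact Finset.sum_congr rfl fun i _ => by ring
            have h2 : ∑ i ∈ Finset.range (s+2),
                (if i = 0 then 0 else c (i-1) + q (i-1)) * ψ ^ i
              = ∑ j ∈ Finset.range (s+1), (c j + q j) * ψ ^ (j+1) := by
              rw [Finset.sum_range_succ'
                (fun i => (if i = 0 then 0 else c (i-1) + q (i-1)) * ψ ^ i) (s+1)]
              simp [Nat.succ_ne_zero]
            have h3 : ∑ i ∈ Finset.range (s+2), r i * ψ ^ i
              = ∑ i ∈ Finset.range (s+1), r i * ψ ^ i := by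
              rw [Finset.sum_range_succ, hrs1, zero_mul, add_zero]
            rw [h1, h2, h3, add_comm]
    · intro i
      have hsucc : (s+1) • γ = s • γ + γ := succ_nsmul γ s
      have hgoal2 : μ b + (s+1) • γ ≤ (if i = 0 then (⊤ : WithTop Λ)
          else min (μ (c (i-1))) (μ (q (i-1)))) + i • γ := by
        by_cases hi : i = 0
        · rw [if_pos hi, top_add]; exact le_top
        · obtain ⟨j, rfl⟩ : ∃ j, i = j + 1 := ⟨i - 1, by omega⟩
          simp only [Nat.succ_ne_zero, if_false, Nat.add_sub_cancel]
          rw [← min_add_add_right]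
          refine le_min ?_ ?_
          · calc μ b + (s+1) • γ = (μ b + s • γ) + γ := by rw [hsucc, add_assoc]
              _ ≤ (μ (c j) + j • γ) + γ := add_le_add_left (hcval j) γ
              _ = μ (c j) + (j+1) • γ := by rw [succ_nsmul]; abel
          · calc μ b + (s+1) • γ = (μ b + s • γ) + γ := by rw [hsucc, add_assoc]
              _ ≤ (μ (c j) + j • γ) + γ := add_le_add_left (hcval j) γ
              _ = (μ (c j) + γ) + j • γ := by abel
              _ ≤ (μ (q j) + γ) + j • γ := add_le_add_left (hqval j) _
              _ = μ (q j) + (j+1) • γ := by rw [succ_nsmul]; abel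
      have hgoal1 : μ b + (s+1) • γ ≤ μ (r i) + i • γ := by
        calc μ b + (s+1) • γ = (μ b + s • γ) + γ := by rw [hsucc, add_assoc]
          _ ≤ (μ (c i) + i • γ) + γ := add_le_add_left (hcval i) γ
          _ = (μ (c i) + γ) + i • γ := by abel
          _ ≤ μ (r i) + i • γ := add_le_add_left (hrval i) _
      have hm := hμ.2.1 (r i) (if i = 0 then 0 else c (i-1) + q (i-1))
      have hminle : μ b + (s+1) • γ
          ≤ min (μ (r i)) (μ (if i = 0 then 0 else c (i-1) + q (i-1))) + i • γ := by
        rw [← min_add_add_right]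
        refine le_min hgoal1 ?_
        refine le_trans hgoal2 (add_le_add_left ?_ _)
        by_cases hi : i = 0
        · rw [if_pos hi, if_pos hi, muZero hv hμ]
        · rw [if_neg hi, if_neg hi]
          exact hμ.2.1 (c (i-1)) (q (i-1))
      exact le_trans hminle (add_le_add_left hm _)

lemma existsExpansion {ψ : Polynomial K} (hψm : ψ.Monic) (h0 : 0 < ψ.degree) :
    ∀ (N : ℕ) (f : Polynomial K), f.natDegree ≤ N →
    ∃ (n : ℕ) (d : ℕ → Polynomial K), (∀ s, (d s).degree < ψ.degree) ∧
      f = ∑ s ∈ Finset.range n, d s * ψ ^ s := by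
  have hψ0 : ψ ≠ 0 := hψm.ne_zero
  have hbot : (⊥ : WithBot ℕ) < ψ.degree := lt_of_lt_of_le (WithBot.bot_lt_coe 0) h0.le
  have hψnat : 0 < ψ.natDegree := natDegree_pos_iff_degree_pos.mpr h0
  have hsmall : ∀ f : Polynomial K, f.degree < ψ.degree →
      ∃ (n : ℕ) (d : ℕ → Polynomial K), (∀ s, (d s).degree < ψ.degree) ∧
        f = ∑ s ∈ Finset.range n, d s * ψ ^ s := by
    intro f hf
    refine ⟨1, fun s => if s = 0 then f else 0, ?_, by simp⟩
    intro s
    show (if s = 0 then f else 0).degree < ψ.degree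
    by_cases hs : s = 0
    · rw [if_pos hs]; exact hf
    · rw [if_neg hs, degree_zero]; exact hbot
  intro N
  induction N with
  | zero =>
    intro f hf
    apply hsmall
    calc f.degree ≤ (f.natDegree : WithBot ℕ) := degree_le_natDegree
      _ ≤ (0 : ℕ) := by exact_mod_cast hf
      _ < ψ.degree := by
          rcases (degree_eq_natDegree hψ0) ▸ h0 with h
          exact_mod_cast (degree_eq_natDegree hψ0) ▸ (by exact_mod_cast hψnat : ((0:ℕ) : WithBot ℕ) < (ψ.natDegree : WithBot ℕ))
  | succ N ih =>
    intro f hf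
    by_cases hsm : f.degree < ψ.degree
    · exact hsmall f hsm
    · have hfd : ψ.degree ≤ f.degree := le_of_not_gt hsm
      have hf0 : f ≠ 0 := by
        intro h; rw [h, degree_zero] at hfd; exact absurd (lt_of_le_of_lt hfd hbot) (lt_irrefl _)
      have hnatle : ψ.natDegree ≤ f.natDegree := natDegree_le_natDegree hfd
      have hqnat : (f /ₘ ψ).natDegree = f.natDegree - ψ.natDegree := natDegree_divByMonic f hψm
      obtain ⟨n, d, hddeg, hdsum⟩ := ih (f /ₘ ψ) (by omega)
      refine ⟨n + 1, fun s => if s = 0 then f %ₘ ψ else d (s - 1), ?_, ?_⟩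
      · intro s
        show (if s = 0 then f %ₘ ψ else d (s-1)).degree < ψ.degree
        by_cases hs : s = 0
        · rw [if_pos hs]; exact degree_modByMonic_lt f hψm
        · rw [if_neg hs]; exact hddeg _
      · have hdm : f = f %ₘ ψ + ψ * (f /ₘ ψ) := (modByMonic_add_div f ψ).symm
        rw [Finset.sum_range_succ'
          (fun s => (if s = 0 then f %ₘ ψ else d (s - 1)) * ψ ^ s) n]
        have e0 : (if (0:ℕ) = 0 then f %ₘ ψ else d (0-1)) * ψ ^ 0 = f %ₘ ψ := by
          rw [if_pos rfl, pow_zero, mul_one]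
        have e1 : ∀ i, (if i+1 = 0 then f %ₘ ψ else d (i+1-1)) * ψ ^ (i+1)
            = d i * ψ ^ (i+1) := by
          intro i; rw [if_neg (Nat.succ_ne_zero i), Nat.add_sub_cancel]
        rw [e0, Finset.sum_congr rfl (fun i _ => e1 i)]
        conv_lhs => rw [hdm]
        rw [hdsum, Finset.mul_sum, add_comm]
        congr 1
        exact Finset.sum_congr rfl fun s _ => by ring

lemma mainIneq (hv : IsVal v) (hμ : ExtVal v μ) {ψ e : Polynomial K} {γ : WithTop Λ}
    (hψm : ψ.Monic) (h0 : 0 < ψ.degree) (he : e.degree < ψ.degree) (hγe : γ ≤ μ e)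
    (hmin : ∀ q r : Polynomial K, q.degree < ψ.degree → r.degree < ψ.degree →
      μ (q * ψ + r) ≤ min (μ r) (μ q + γ))
    {μ' : Polynomial K → WithTop Λ} (hA : AugVal μ ψ γ μ')
    (f : Polynomial K) (n : ℕ) (d : ℕ → Polynomial K)
    (hd : ∀ s, (d s).degree < ψ.degree)
    (hf : f = ∑ s ∈ Finset.range n, d s * (ψ + e) ^ s) :
    (Finset.range n).inf (fun s => μ (d s) + s • γ) ≤ μ' f := by
  have hbot : (⊥ : WithBot ℕ) < ψ.degree := lt_of_lt_of_le (WithBot.bot_lt_coe 0) h0.le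
  have H : ∀ s : ℕ, ∃ c : ℕ → Polynomial K, (∀ j, (c j).degree < ψ.degree) ∧
      (∀ j, s < j → c j = 0) ∧
      (d s * (ψ + e) ^ s = ∑ j ∈ Finset.range (s+1), c j * ψ ^ j) ∧
      (∀ j, μ (d s) + s • γ ≤ μ (c j) + j • γ) :=
    fun s => muExpand hv hμ hψm h0 he hγe hmin s (d s) (hd s)
  choose c hc1 hc2 hc3 hc4 using H
  have hext : ∀ s ∈ Finset.range n, d s * (ψ + e) ^ s = ∑ j ∈ Finset.range n, c s j * ψ ^ j := by
    intro s hs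
    rw [hc3 s]
    apply Finset.sum_subset
    · exact Finset.range_subset_range.mpr (Finset.mem_range.mp hs)
    · intro j _ hj
      rw [hc2 s j (by simpa using hj), zero_mul]
  set C : ℕ → Polynomial K := fun j => ∑ s ∈ Finset.range n, c s j with hC
  have hCdeg : ∀ j, (C j).degree < ψ.degree := by
    intro j
    apply lt_of_le_of_lt (degree_sum_le _ _)
    rw [Finset.sup_lt_iff hbot]
    exact fun s _ => hc1 s j
  have hfC : f = ∑ j ∈ Finset.range n, C j * ψ ^ j := by
    rw [hf, Finset.sum_congr rfl hext, Finset.sum_comm]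
    exact Finset.sum_congr rfl fun j _ => by rw [hC]; dsimp only; rw [Finset.sum_mul]
  rw [hA f n C hCdeg hfC]
  apply Finset.le_inf
  intro j hj
  apply muSumAdd hv hμ (Finset.range n) (fun s => c s j) _ (j • γ)
  intro s hs
  exact le_trans (Finset.inf_le hs) (hc4 s j)

/-- sufficiency in unicity of ordinary augmentations: if
`φ* = φ + a` with `deg a < deg φ` and `μ(a) ≥ γ > μ(φ)`, then `φ*` is monic of the
same degree and `[μ; φ, γ] = [μ; φ*, γ]`. -/
theorem unicity_ordinary_augmentation_suff (v : K → WithTop Λ)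
    (μ : Polynomial K → WithTop Λ) (hv : IsVal v) (hμ : ExtVal v μ)
    (φ : Polynomial K) (hφ : KeyPoly μ φ)
    (a : Polynomial K) (ha : a.degree < φ.degree)
    (φs : Polynomial K) (hφs : φs = φ + a)
    (γ : WithTop Λ) (hγ : μ φ < γ) (hge : γ ≤ μ a) :
    φs.Monic ∧ φs.degree = φ.degree ∧
      ∀ μ' μs' : Polynomial K → WithTop Λ,
        AugVal μ φ γ μ' → AugVal μ φs γ μs' → μ' = μs' := by
  have hφm : φ.Monic := hφ.1
  have hφtop : μ φ ≠ ⊤ := hφ.2.2.1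
  have hm : φs.Monic := hφs ▸ hφm.add_of_left ha
  have hdeg : φs.degree = φ.degree := hφs ▸ degree_add_eq_left_of_degree_lt ha
  have h0 : 0 < φ.degree := by
    by_contra h
    push_neg at h
    have hφ1 : φ = 1 := hφm.degree_le_zero_iff_eq_one.mp h
    apply hφ.2.2.2.1
    refine ⟨1, ?_⟩
    rw [hφ1, one_mul, sub_self, muZero hv hμ]
    have : μ (1 : Polynomial K) = 0 := by
      have := hμ.2.2 1; rwa [Polynomial.C_1, hv.2.1] at this
    rw [this]
    exact WithTop.coe_lt_top 0
  have h0s : 0 < φs.degree := hdeg ▸ h0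
  have hμφs : μ φs = μ φ := by
    rw [hφs]; exact muAddOfLt hv hμ (lt_of_lt_of_le hγ hge)
  have hγa : μ φ < μ a := lt_of_lt_of_le hγ hge
  -- min-estimate for φ itself
  have hminφ : ∀ q r : Polynomial K, q.degree < φ.degree → r.degree < φ.degree →
      μ (q * φ + r) ≤ min (μ r) (μ q + γ) :=
    lemmaA hv hμ hφ.2.1 hφtop hγ rfl (fun _ _ _ _ h => h)
  -- min-estimate for φs
  have hminφs : ∀ q r : Polynomial K, q.degree < φ.degree → r.degree < φ.degree →
      μ (q * φs + r) ≤ min (μ r) (μ q + γ) := by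
    apply lemmaA hv hμ hφ.2.1 hφtop hγ hμφs
    intro q r hreq hrtop hlt
    have hqtop : μ q ≠ ⊤ := by
      intro h; exact hrtop (by rw [hreq, h, top_add])
    have h1 : μ r < μ (q * a) := by
      rw [hμ.1, hreq]
      exact lt_of_lt_of_le (WithTop.add_lt_add_left hqtop hγ) (add_le_add_right hge _)
    have h2 := hμ.2.1 (r + q * φs) (-(q * a))
    have he : r + q * φs + -(q * a) = r + q * φ := by rw [hφs]; ring
    rw [he, muNeg hv hμ] at h2
    exact lt_of_lt_of_le (lt_min hlt h1) h2
  refine ⟨hm, hdeg, ?_⟩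
  intro μ' μs' h1 h2
  funext f
  obtain ⟨n, b, hbdeg, hbsum⟩ := existsExpansion hφm h0 f.natDegree f le_rfl
  obtain ⟨m, d, hddeg, hdsum⟩ := existsExpansion hm h0s f.natDegree f le_rfl
  have e1 : μ' f = (Finset.range n).inf fun s => μ (b s) + s • γ := h1 f n b hbdeg hbsum
  have e2 : μs' f = (Finset.range m).inf fun s => μ (d s) + s • γ := h2 f m d hddeg hdsum
  -- rephrase min-estimates in terms of φs.degree
  have hminφs' : ∀ q r : Polynomial K, q.degree < φs.degree → r.degree < φs.degree →
      μ (q * φs + r) ≤ min (μ r) (μ q + γ) := by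
    intro q r hq hr; exact hminφs q r (hdeg ▸ hq) (hdeg ▸ hr)
  apply le_antisymm
  · -- μ' f ≤ μs' f : expand the φ-expansion... use mainIneq for μs' with ψ = φs, e = -a
    rw [e1]
    have hQ : f = ∑ s ∈ Finset.range n, b s * (φs + -a) ^ s := by
      have : φs + -a = φ := by rw [hφs]; ring
      rw [this]; exact hbsum
    have := mainIneq hv hμ hm h0s
      (by rw [degree_neg]; exact hdeg ▸ ha)
      (by rw [muNeg hv hμ]; exact hge)
      hminφs' h2 f n b (fun s => hdeg ▸ hbdeg s) hQ
    exact this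
  · rw [e2]
    have hQ : f = ∑ s ∈ Finset.range m, d s * (φ + a) ^ s := by rw [← hφs]; exact hdsum
    exact mainIneq hv hμ hφm h0 ha hge hminφ h1 f m d (fun s => hddeg s |>.trans_le hdeg.le) hQ
end

section
/- For a ∈ K and γ ∈ Λ∞, define the depth-zero valuation ω_{a,γ} on K[x] by ω_{a,γ}(Σ_s a_s(x−a)^s) = min_s{v(a_s) + sγ}. Then for a,b ∈ K and γ,δ ∈ Λ∞: ω_{a,γ} ≤ ω_{b,δ} (pointwise) if and only if γ ≤ δ and v(a−b) ≥ γ. -/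
open Polynomial Finset

variable {K : Type*} [Field K] {Λ : Type*} [AddCommGroup Λ] [LinearOrder Λ] [IsOrderedAddMonoid Λ]

/-- `ω` is the depth-zero valuation `ω_{a,γ}`, acting on Taylor expansions at `a`
by `ω(Σ c_s (x−a)^s) = min_s (v(c_s) + s·γ)`. -/
def DepthZeroVal (v : K → WithTop Λ) (a : K) (γ : WithTop Λ)
    (ω : Polynomial K → WithTop Λ) : Prop :=
  ∀ (f : Polynomial K) (n : ℕ) (c : ℕ → K),
    f = ∑ s ∈ Finset.range n, Polynomial.C (c s) * (Polynomial.X - Polynomial.C a) ^ s →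
    ω f = (Finset.range n).inf fun s => v (c s) + s • γ

section aux
variable {v : K → WithTop Λ}

lemma IsVal.zero' (hv : IsVal v) : v 0 = ⊤ := (hv.1 0).mpr rfl

lemma IsVal.negone (hv : IsVal v) : v (-1) = 0 := by
  have h := hv.2.2.1 (-1) (-1)
  rw [neg_mul_neg, one_mul, hv.2.1] at h
  cases hx : v (-1 : K) with
  | top => rw [hx] at h; simp at h
  | coe x =>
    rw [hx, ← WithTop.coe_add] at h
    have hxx : x + x = 0 := by exact_mod_cast h.symm
    have hx0 : x = 0 := by
      rcases lt_trichotomy x 0 with h1 | h1 | h1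
      · exact absurd hxx (by have := add_neg h1 h1; exact ne_of_lt this)
      · exact h1
      · exact absurd hxx (by have := add_pos h1 h1; exact (ne_of_gt this))
    rw [hx0, WithTop.coe_zero]

lemma IsVal.neg' (hv : IsVal v) (x : K) : v (-x) = v x := by
  have : -x = (-1) * x := by ring
  rw [this, hv.2.2.1, hv.negone, zero_add]

lemma IsVal.nat (hv : IsVal v) (n : ℕ) : (0 : WithTop Λ) ≤ v (n : K) := by
  induction n with
  | zero => simp [hv.zero']
  | succ k ih =>
    push_cast
    refine le_trans ?_ (hv.2.2.2 k 1)
    rw [hv.2.1]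
    exact le_min ih le_rfl

lemma IsVal.pow (hv : IsVal v) (x : K) (k : ℕ) : v (x ^ k) = k • v x := by
  induction k with
  | zero => simpa using hv.2.1
  | succ m ih => rw [pow_succ, hv.2.2.1, ih, succ_nsmul]

lemma IsVal.sum (hv : IsVal v) {ι : Type*} (s : Finset ι) (e : ι → K) :
    s.inf (fun i => v (e i)) ≤ v (∑ i ∈ s, e i) := by
  induction s using Finset.cons_induction with
  | empty => simp [hv.zero']
  | cons i s hi ih =>
    rw [Finset.sum_cons, Finset.inf_cons]
    exact le_trans (inf_le_inf_left _ ih) (hv.2.2.2 _ _)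

end aux

/-- `ω_{a,γ} ≤ ω_{b,δ}` pointwise iff `γ ≤ δ` and `v(a−b) ≥ γ`. -/
theorem depthZero_le_iff (v : K → WithTop Λ) (hv : IsVal v)
    (a b : K) (γ δ : WithTop Λ)
    (ωa ωb : Polynomial K → WithTop Λ)
    (hωa : DepthZeroVal v a γ ωa) (hωb : DepthZeroVal v b δ ωb) :
    (∀ f : Polynomial K, ωa f ≤ ωb f) ↔ (γ ≤ δ ∧ γ ≤ v (a - b)) := by
  constructor
  · intro h
    have ha : ωa (X - C a) = γ := by
      have hsum : (X - C a : Polynomial K)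
          = ∑ s ∈ Finset.range 2, C ((fun s => if s = 1 then (1 : K) else 0) s) * (X - C a) ^ s := by
        simp [Finset.sum_range_succ]
      rw [hωa _ 2 _ hsum]
      simp [Finset.range_add_one, hv.2.1, hv.zero']
    have hb : ωb (X - C a) = min (v (b - a)) δ := by
      have hsum : (X - C a : Polynomial K)
          = ∑ s ∈ Finset.range 2, C ((fun s => if s = 1 then (1 : K) else b - a) s) * (X - C b) ^ s := by
        simp [Finset.sum_range_succ, map_sub]
      rw [hωb _ 2 _ hsum]
      simp [Finset.range_add_one, hv.2.1]
      rw [min_comm]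
    have := h (X - C a)
    rw [ha, hb] at this
    refine ⟨le_trans this (min_le_right _ _), ?_⟩
    have : γ ≤ v (b - a) := le_trans this (min_le_left _ _)
    rwa [show b - a = -(a - b) by ring, hv.neg'] at this
  · rintro ⟨hγδ, hab⟩ f
    have hba : γ ≤ v (b - a) := by
      rwa [show b - a = -(a - b) by ring, hv.neg']
    set n := (taylor a f).natDegree + 1 with hn
    set d : ℕ → K := fun t => (taylor a f).coeff t with hd
    have hfa : f = ∑ t ∈ Finset.range n, C (d t) * (X - C a) ^ t := by
      conv_lhs => rw [← sum_taylor_eq f a]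
      exact Polynomial.sum_over_range _ (by simp)
    set c : ℕ → K := fun s => ∑ t ∈ Finset.range n, d t * ((b - a) ^ (t - s) * (t.choose s : K))
      with hc
    have step : ∀ t : ℕ, (X - C a : Polynomial K) ^ t
        = ∑ s ∈ Finset.range (t + 1), (X - C b) ^ s * C (b - a) ^ (t - s) * (t.choose s : Polynomial K) := by
      intro t
      rw [← add_pow]
      congr 1
      rw [map_sub]; ring
    have hfb : f = ∑ s ∈ Finset.range n, C (c s) * (X - C b) ^ s := by
      calc f = ∑ t ∈ Finset.range n, C (d t) * (X - C a) ^ t := hfa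
        _ = ∑ t ∈ Finset.range n, ∑ s ∈ Finset.range n,
              C (d t) * ((X - C b) ^ s * C (b - a) ^ (t - s) * (t.choose s : Polynomial K)) := by
            refine Finset.sum_congr rfl fun t ht => ?_
            rw [step t, Finset.mul_sum]
            refine Finset.sum_subset (Finset.range_subset_range.mpr (Finset.mem_range.mp ht)) ?_
            intro s hs hs'
            have hts : t < s := by
              simp only [Finset.mem_range, not_lt] at hs'
              omega
            have : t.choose s = 0 := Nat.choose_eq_zero_of_lt hts
            simp [this]
        _ = ∑ s ∈ Finset.range n, C (c s) * (X - C b) ^ s := by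
            rw [Finset.sum_comm]
            refine Finset.sum_congr rfl fun s hs => ?_
            rw [hc]
            simp only [map_sum, map_mul, map_pow, map_natCast, Finset.sum_mul]
            refine Finset.sum_congr rfl fun t ht => ?_
            ring
    rw [hωa f n d hfa, hωb f n c hfb]
    refine Finset.le_inf fun s hs => ?_
    have hcs : (Finset.range n).inf (fun t => v (d t * ((b - a) ^ (t - s) * (t.choose s : K))))
        ≤ v (c s) := hv.sum _ _
    obtain ⟨t₀, ht₀mem, ht₀⟩ := Finset.exists_mem_eq_inf (Finset.range n)
      ⟨0, by simp [hn]⟩ (fun t => v (d t * ((b - a) ^ (t - s) * (t.choose s : K))))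
    rw [ht₀] at hcs
    by_cases hts : s ≤ t₀
    · have h1 : v (d t₀ * ((b - a) ^ (t₀ - s) * (t₀.choose s : K)))
          = v (d t₀) + ((t₀ - s) • v (b - a) + v (t₀.choose s : K)) := by
        rw [hv.2.2.1, hv.2.2.1, hv.pow]
      calc (Finset.range n).inf (fun t => v (d t) + t • γ)
          ≤ v (d t₀) + t₀ • γ := Finset.inf_le ht₀mem
        _ = v (d t₀) + ((t₀ - s) • γ + (0 + s • γ)) := by
            rw [zero_add, ← add_nsmul, Nat.sub_add_cancel hts]
        _ ≤ v (d t₀) + ((t₀ - s) • v (b - a) + (v (t₀.choose s : K) + s • δ)) := by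
            refine add_le_add_right (add_le_add ?_ (add_le_add (hv.nat _) ?_)) _
            · exact nsmul_le_nsmul_right hba _
            · exact nsmul_le_nsmul_right hγδ _
        _ = v (d t₀ * ((b - a) ^ (t₀ - s) * (t₀.choose s : K))) + s • δ := by
            rw [h1]; simp [add_assoc]
        _ ≤ v (c s) + s • δ := add_le_add_left hcs _
    · have hz : d t₀ * ((b - a) ^ (t₀ - s) * (t₀.choose s : K)) = 0 := by
        rw [Nat.choose_eq_zero_of_lt (lt_of_not_ge hts)]
        simp
      rw [hz, hv.zero'] at hcs
      rw [top_le_iff.mp hcs, top_add]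
      exact le_top
end

section
/- For a ∈ K and γ ∈ Λ, the mapping ω_{a,γ} defined by ω_{a,γ}(Σ_s a_s(x−a)^s) = min_s{v(a_s)+sγ} is a valuation on K[x] extending v, and the set of Λ∞-valued valuations ρ extending v with ρ < ω_{a,γ} equals {ω_{a,δ} | δ ∈ Λ, δ < γ}. -/
open Polynomial Finset

variable {K : Type*} [Field K] {Λ : Type*} [AddCommGroup Λ] [LinearOrder Λ] [IsOrderedAddMonoid Λ]

section Generic
variable {R : Type*} [CommRing R] {w : R → WithTop Λ}

lemma MV.wneg (hm : ∀ x y, w (x*y) = w x + w y) (h1 : w 1 = 0) (x : R) :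
    w (-x) = w x := by
  have hn1 : w (-1) = 0 := by
    have h := hm (-1) (-1)
    rw [neg_mul_neg, one_mul, h1] at h
    rcases (eq_or_ne (w (-1)) ⊤) with ht | ht
    · rw [ht] at h; simp at h
    · lift w (-1) to Λ using ht with z hz
      rw [← WithTop.coe_add] at h
      have hz0 : z + z = 0 := by exact_mod_cast h.symm
      have : z = 0 := by
        rcases lt_trichotomy z 0 with h' | h' | h'
        · have := add_lt_add h' h'; rw [add_zero] at this; exact absurd hz0 (ne_of_lt this)
        · exact h'
        · have := add_lt_add h' h'; rw [add_zero] at this; exact absurd hz0 (ne_of_gt this)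
      simp [this]
  calc w (-x) = w ((-1) * x) := by ring_nf
    _ = w (-1) + w x := hm _ _
    _ = w x := by rw [hn1, zero_add]

lemma MV.wpow (hm : ∀ x y, w (x*y) = w x + w y) (h1 : w 1 = 0) (x : R) (n : ℕ) :
    w (x ^ n) = n • w x := by
  induction n with
  | zero => simpa using h1
  | succ n ih => rw [pow_succ, hm, ih, succ_nsmul]

lemma MV.w_add_eq (hm : ∀ x y, w (x*y) = w x + w y)
    (ha : ∀ x y, min (w x) (w y) ≤ w (x+y)) (h1 : w 1 = 0)
    {x y : R} (h : w x < w y) : w (x + y) = w x := by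
  have h1' : min (w x) (w y) ≤ w (x + y) := ha x y
  rw [min_eq_left h.le] at h1'
  refine le_antisymm ?_ h1'
  have h2 : min (w (x+y)) (w (-y)) ≤ w x := by
    have := ha (x + y) (-y); simpa using this
  rw [MV.wneg hm h1] at h2
  rcases min_le_iff.mp h2 with h3 | h3
  · exact h3
  · exact absurd (lt_of_lt_of_le h h3) (lt_irrefl _)

lemma MV.w_sum_ge (ha : ∀ x y, min (w x) (w y) ≤ w (x+y)) (h0 : w 0 = ⊤)
    {ι : Type*} (t : Finset ι) (x : ι → R) :
    t.inf (fun i => w (x i)) ≤ w (∑ i ∈ t, x i) := by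
  classical
  induction t using Finset.induction with
  | empty => simp [h0]
  | @insert i t' hni ih =>
    rw [Finset.sum_insert hni, Finset.inf_insert]
    exact le_trans (min_le_min le_rfl ih) (ha _ _)

lemma MV.w_sum_ge' (ha : ∀ x y, min (w x) (w y) ≤ w (x+y)) (h0 : w 0 = ⊤)
    {ι : Type*} {t : Finset ι} {x : ι → R} {m : WithTop Λ}
    (h : ∀ i ∈ t, m ≤ w (x i)) : m ≤ w (∑ i ∈ t, x i) :=
  le_trans (Finset.le_inf h) (MV.w_sum_ge ha h0 t x)

lemma MV.w_sum_gt (ha : ∀ x y, min (w x) (w y) ≤ w (x+y)) (h0 : w 0 = ⊤)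
    {ι : Type*} {t : Finset ι} {x : ι → R} {m : WithTop Λ} (hm : m ≠ ⊤)
    (h : ∀ i ∈ t, m < w (x i)) : m < w (∑ i ∈ t, x i) := by
  classical
  induction t using Finset.induction with
  | empty => simp [h0]; exact lt_top_iff_ne_top.mpr hm
  | @insert j t' hni ih =>
    rw [Finset.sum_insert hni]
    refine lt_of_lt_of_le ?_ (ha _ _)
    rw [lt_min_iff]
    exact ⟨h j (Finset.mem_insert_self _ _), ih (fun k hk => h k (Finset.mem_insert_of_mem hk))⟩

lemma MV.w_sum_add_ge (ha : ∀ x y, min (w x) (w y) ≤ w (x+y)) (h0 : w 0 = ⊤)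
    {ι : Type*} {t : Finset ι} {x : ι → R} {m c : WithTop Λ} (hne : t.Nonempty)
    (h : ∀ i ∈ t, m ≤ w (x i) + c) : m ≤ w (∑ i ∈ t, x i) + c := by
  obtain ⟨i0, hi0, heq⟩ := Finset.exists_mem_eq_inf t hne (fun i => w (x i))
  calc m ≤ w (x i0) + c := h i0 hi0
    _ = t.inf (fun i => w (x i)) + c := by rw [heq]
    _ ≤ w (∑ i ∈ t, x i) + c := add_le_add_left (MV.w_sum_ge ha h0 t x) c

lemma MV.add_lt_add_of_lt_of_le {x y z u : WithTop Λ} (hz : z ≠ ⊤) (h1 : x < y)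
    (h2 : z ≤ u) : x + z < y + u :=
  lt_of_lt_of_le (WithTop.add_lt_add_right hz h1) (add_le_add_right h2 y)

end Generic

noncomputable def MV.Wv (v : K → WithTop Λ) (δ : Λ) (g : Polynomial K) : WithTop Λ :=
  (Finset.range (g.natDegree + 1)).inf fun s => v (g.coeff s) + ↑(s • δ)

section Wv
variable (v : K → WithTop Λ) (δ : Λ)

lemma MV.inf_range_extend (F : ℕ → WithTop Λ) {m n : ℕ} (hmn : m ≤ n)
    (h : ∀ s, m ≤ s → F s = ⊤) : (range n).inf F = (range m).inf F := by
  induction n, hmn using Nat.le_induction with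
  | base => rfl
  | succ n hn ih =>
    rw [Finset.range_add_one, Finset.inf_insert, h n hn, top_inf_eq, ih]

variable (hv0 : v 0 = ⊤)
include hv0

lemma MV.Wv_eq_inf {g : Polynomial K} {n : ℕ} (h : ∀ s, n ≤ s → g.coeff s = 0) :
    MV.Wv v δ g = (range n).inf (fun s => v (g.coeff s) + ↑(s • δ)) := by
  set F := fun s => v (g.coeff s) + (↑(s • δ) : WithTop Λ) with hF
  have h1 : ∀ s, g.natDegree + 1 ≤ s → F s = ⊤ := by
    intro s hs
    simp [hF, coeff_eq_zero_of_natDegree_lt (by omega : g.natDegree < s), hv0]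
  have h2 : ∀ s, n ≤ s → F s = ⊤ := by
    intro s hs; simp [hF, h s hs, hv0]
  have e1 := MV.inf_range_extend F (le_max_right n (g.natDegree + 1)) h1
  have e2 := MV.inf_range_extend F (le_max_left n (g.natDegree + 1)) h2
  show (range (g.natDegree + 1)).inf F = (range n).inf F
  rw [← e1, e2]

lemma MV.Wv_le_coeff (g : Polynomial K) (s : ℕ) :
    MV.Wv v δ g ≤ v (g.coeff s) + ↑(s • δ) := by
  rcases le_or_gt s g.natDegree with h | h
  · exact Finset.inf_le (Finset.mem_range.mpr (by omega))
  · rw [coeff_eq_zero_of_natDegree_lt h, hv0, top_add]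
    exact le_top

lemma MV.Wv_zero : MV.Wv v δ 0 = ⊤ := by
  simp [MV.Wv, hv0]

lemma MV.Wv_C (b : K) : MV.Wv v δ (C b) = v b := by
  rcases eq_or_ne b 0 with rfl | hb
  · simp [MV.Wv_zero v δ hv0, hv0]
  · simp [MV.Wv, natDegree_C]

omit hv0 in
lemma MV.Wv_exists (g : Polynomial K) :
    ∃ i, v (g.coeff i) + ↑(i • δ) = MV.Wv v δ g := by
  obtain ⟨i, _, h⟩ := Finset.exists_mem_eq_inf (range (g.natDegree + 1))
    (by simp : (range (g.natDegree + 1)).Nonempty) (fun s => v (g.coeff s) + ↑(s • δ))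
  exact ⟨i, h.symm⟩

lemma MV.Wv_ne_top (hvt : ∀ b : K, v b = ⊤ ↔ b = 0) {g : Polynomial K} (hg : g ≠ 0) :
    MV.Wv v δ g ≠ ⊤ := by
  have h1 : v (g.coeff g.natDegree) ≠ ⊤ := by
    rw [ne_eq, hvt]; exact mt leadingCoeff_eq_zero.mp hg
  have := MV.Wv_le_coeff v δ hv0 g g.natDegree
  intro ht
  rw [ht, top_le_iff, WithTop.add_eq_top] at this
  rcases this with h | h
  · exact h1 h
  · exact WithTop.coe_ne_top h

lemma MV.Wv_min_le (ha : ∀ x y : K, min (v x) (v y) ≤ v (x+y)) (f g : Polynomial K) :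
    min (MV.Wv v δ f) (MV.Wv v δ g) ≤ MV.Wv v δ (f + g) := by
  set n := max f.natDegree g.natDegree + 1 with hn
  have hc : ∀ s, n ≤ s → (f + g).coeff s = 0 := by
    intro s hs
    apply coeff_eq_zero_of_natDegree_lt
    exact lt_of_le_of_lt (natDegree_add_le f g) (by omega)
  rw [MV.Wv_eq_inf v δ hv0 hc]
  refine Finset.le_inf fun s _ => ?_
  have h1 : min (v (f.coeff s) + ↑(s • δ)) (v (g.coeff s) + ↑(s • δ))
      ≤ v ((f + g).coeff s) + ↑(s • δ) := by
    rw [min_add_add_right, coeff_add]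
    exact add_le_add_left (ha _ _) _
  exact le_trans (min_le_min (MV.Wv_le_coeff v δ hv0 f s) (MV.Wv_le_coeff v δ hv0 g s)) h1

omit hv0 in
lemma MV.exists_minimal {p : ℕ → Prop} (h : ∃ n, p n) : ∃ n, p n ∧ ∀ k < n, ¬ p k := by
  classical exact ⟨Nat.find h, Nat.find_spec h, fun k hk => Nat.find_min h hk⟩

omit hv0 in
lemma MV.Wv_mul (hv : IsVal v) (f g : Polynomial K) :
    MV.Wv v δ (f * g) = MV.Wv v δ f + MV.Wv v δ g := by
  obtain ⟨hvt, hv1, hvm, hva⟩ := hv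
  have hv0 : v 0 = ⊤ := (hvt 0).mpr rfl
  rcases eq_or_ne f 0 with rfl | hf
  · rw [zero_mul, MV.Wv_zero v δ hv0, top_add]
  rcases eq_or_ne g 0 with rfl | hg
  · rw [mul_zero, MV.Wv_zero v δ hv0, add_top]
  have hWf := MV.Wv_ne_top v δ hv0 hvt hf
  have hWg := MV.Wv_ne_top v δ hv0 hvt hg
  obtain ⟨i, hi, himin⟩ := MV.exists_minimal (MV.Wv_exists v δ f)
  obtain ⟨j, hj, hjmin⟩ := MV.exists_minimal (MV.Wv_exists v δ g)
  have hfi : v (f.coeff i) ≠ ⊤ := by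
    intro h; rw [h, top_add] at hi; exact hWf hi.symm
  have hgj : v (g.coeff j) ≠ ⊤ := by
    intro h; rw [h, top_add] at hj; exact hWg hj.symm
  set m0 := v (f.coeff i) + v (g.coeff j) with hm0
  have hm0ne : m0 ≠ ⊤ := by
    rw [hm0, ne_eq, WithTop.add_eq_top]; tauto
  have hsplit : MV.Wv v δ f + MV.Wv v δ g = m0 + ↑((i + j) • δ) := by
    rw [← hi, ← hj, add_add_add_comm, hm0, add_nsmul, WithTop.coe_add]
  -- per-pair lower bound (non-strict), valid for any k and pair on antidiagonal k
  have hpair : ∀ (k : ℕ) (x : ℕ × ℕ), x.1 + x.2 = k →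
      MV.Wv v δ f + MV.Wv v δ g ≤ v (f.coeff x.1 * g.coeff x.2) + ↑(k • δ) := by
    intro k x hx
    rw [hvm, ← hx, add_nsmul, WithTop.coe_add, add_add_add_comm]
    exact add_le_add (MV.Wv_le_coeff v δ hv0 f x.1) (MV.Wv_le_coeff v δ hv0 g x.2)
  -- ≥ direction
  have hge : MV.Wv v δ f + MV.Wv v δ g ≤ MV.Wv v δ (f * g) := by
    refine Finset.le_inf fun k _ => ?_
    rw [coeff_mul]
    refine MV.w_sum_add_ge hva hv0 ⟨(0, k), by simp⟩ fun x hx => ?_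
    exact hpair k x (Finset.HasAntidiagonal.mem_antidiagonal.mp hx)
  -- key coefficient value
  have hkey : v ((f * g).coeff (i + j)) = m0 := by
    rw [coeff_mul]
    have hmem : ((i, j) : ℕ × ℕ) ∈ antidiagonal (i + j) := by
      simp [Finset.mem_antidiagonal]
    rw [← Finset.add_sum_erase _ _ hmem]
    have hrest : m0 < v (∑ x ∈ (antidiagonal (i + j)).erase (i, j),
        f.coeff x.1 * g.coeff x.2) := by
      refine MV.w_sum_gt hva hv0 hm0ne fun x hx => ?_
      obtain ⟨hxne, hxmem⟩ := Finset.mem_erase.mp hx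
      have hsum : x.1 + x.2 = i + j := Finset.HasAntidiagonal.mem_antidiagonal.mp hxmem
      have hne2 : x.1 ≠ i := by
        intro h
        apply hxne
        have : x.2 = j := by omega
        exact Prod.ext h this
      rw [hvm]
      have hcancel : m0 + ↑((i + j) • δ) <
          (v (f.coeff x.1) + v (g.coeff x.2)) + ↑((i + j) • δ) → m0 < v (f.coeff x.1) + v (g.coeff x.2) := by
        intro h
        by_contra hle
        push_neg at hle
        exact absurd (add_le_add_left hle (↑((i + j) • δ))) (not_le.mpr h)
      apply hcancel
      rw [← hsplit, ← hsum, add_nsmul, WithTop.coe_add, add_add_add_comm]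
      rcases lt_or_gt_of_ne hne2 with hlt | hgt
      · have h1 : MV.Wv v δ f < v (f.coeff x.1) + ↑(x.1 • δ) :=
          lt_of_le_of_ne (MV.Wv_le_coeff v δ hv0 f x.1) (Ne.symm (himin x.1 hlt))
        have h2 : MV.Wv v δ g ≤ v (g.coeff x.2) + ↑(x.2 • δ) := MV.Wv_le_coeff v δ hv0 g x.2
        exact MV.add_lt_add_of_lt_of_le hWg h1 h2
      · have hx2 : x.2 < j := by omega
        have h1 : MV.Wv v δ g < v (g.coeff x.2) + ↑(x.2 • δ) :=
          lt_of_le_of_ne (MV.Wv_le_coeff v δ hv0 g x.2) (Ne.symm (hjmin x.2 hx2))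
        have h2 : MV.Wv v δ f ≤ v (f.coeff x.1) + ↑(x.1 • δ) := MV.Wv_le_coeff v δ hv0 f x.1
        calc MV.Wv v δ f + MV.Wv v δ g
            < (v (f.coeff x.1) + ↑(x.1 • δ)) + (v (g.coeff x.2) + ↑(x.2 • δ)) := by
              rw [add_comm (MV.Wv v δ f), add_comm (v (f.coeff x.1) + ↑(x.1 • δ))]
              exact MV.add_lt_add_of_lt_of_le hWf h1 h2
          _ = _ := rfl
    have := MV.w_add_eq hvm hva hv1 (x := f.coeff i * g.coeff j)
      (y := ∑ x ∈ (antidiagonal (i + j)).erase (i, j), f.coeff x.1 * g.coeff x.2)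
      (by rw [hvm]; exact hrest)
    rw [this, hvm]
  have hle : MV.Wv v δ (f * g) ≤ MV.Wv v δ f + MV.Wv v δ g := by
    calc MV.Wv v δ (f * g) ≤ v ((f * g).coeff (i + j)) + ↑((i + j) • δ) :=
          MV.Wv_le_coeff v δ hv0 (f * g) (i + j)
      _ = m0 + ↑((i + j) • δ) := by rw [hkey]
      _ = _ := hsplit.symm
  exact le_antisymm hle hge

end Wv

noncomputable def MV.Om (v : K → WithTop Λ) (a : K) (δ : Λ) (f : Polynomial K) : WithTop Λ :=
  MV.Wv v δ (f.comp (X + C a))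

section Om
variable (v : K → WithTop Λ)

lemma MV.comp_comp (a : K) (f : Polynomial K) : (f.comp (X + C a)).comp (X - C a) = f := by
  rw [comp_assoc]
  simp [add_comp, sub_comp]

lemma MV.expand (a : K) (f : Polynomial K) :
    f = ∑ s ∈ range ((f.comp (X + C a)).natDegree + 1),
        C ((f.comp (X + C a)).coeff s) * (X - C a) ^ s := by
  set g := f.comp (X + C a) with hg
  have h1 : g.comp (X - C a) = f := MV.comp_comp a f
  conv_lhs => rw [← h1, g.as_sum_range]
  rw [Polynomial.sum_comp]
  refine Finset.sum_congr rfl fun s _ => ?_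
  rw [← C_mul_X_pow_eq_monomial, mul_comp, C_comp, pow_comp, X_comp]

lemma MV.coeff_of_expansion (a : K) {f : Polynomial K} {n : ℕ} {c : ℕ → K}
    (h : f = ∑ s ∈ range n, C (c s) * (X - C a) ^ s) (t : ℕ) :
    (f.comp (X + C a)).coeff t = if t < n then c t else 0 := by
  have h2 : f.comp (X + C a) = ∑ s ∈ range n, C (c s) * X ^ s := by
    rw [h, Polynomial.sum_comp]
    refine Finset.sum_congr rfl fun s _ => ?_
    rw [mul_comp, C_comp, pow_comp, sub_comp, X_comp, C_comp, add_sub_cancel_right]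
  rw [h2, finset_sum_coeff]
  simp only [coeff_C_mul, coeff_X_pow, mul_ite, mul_one, mul_zero]
  rw [Finset.sum_ite_eq (range n) t c]
  simp [Finset.mem_range]

lemma MV.Om_spec (hv0 : v 0 = ⊤) (a : K) (δ : Λ) :
    DepthZeroVal v a (δ : WithTop Λ) (MV.Om v a δ) := by
  intro f n c h
  have hc := MV.coeff_of_expansion a h
  have hzero : ∀ s, n ≤ s → (f.comp (X + C a)).coeff s = 0 := fun s hs => by
    rw [hc s]; simp [Nat.not_lt.mpr hs]
  unfold MV.Om
  rw [MV.Wv_eq_inf v δ hv0 hzero]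
  refine Finset.inf_congr rfl fun s hs => ?_
  rw [hc s, if_pos (Finset.mem_range.mp hs), WithTop.coe_nsmul]

lemma MV.depthZero_eq (hv0 : v 0 = ⊤) {a : K} {δ : Λ} {ρ : Polynomial K → WithTop Λ}
    (h : DepthZeroVal v a (δ : WithTop Λ) ρ) : ρ = MV.Om v a δ := by
  funext f
  rw [h f _ _ (MV.expand a f), MV.Om_spec v hv0 a δ f _ _ (MV.expand a f)]

lemma MV.Om_extVal (hv : IsVal v) (a : K) (δ : Λ) : ExtVal v (MV.Om v a δ) := by
  have hv0 : v 0 = ⊤ := (hv.1 0).mpr rfl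
  refine ⟨fun f g => ?_, fun f g => ?_, fun b => ?_⟩
  · unfold MV.Om; rw [mul_comp]; exact MV.Wv_mul v δ hv _ _
  · unfold MV.Om; rw [add_comp]; exact MV.Wv_min_le v δ hv0 hv.2.2.2 _ _
  · unfold MV.Om; rw [C_comp]; exact MV.Wv_C v δ hv0 b

lemma MV.Om_linear (hv : IsVal v) (a : K) (δ : Λ) : MV.Om v a δ (X - C a) = (δ : WithTop Λ) := by
  have hv0 : v 0 = ⊤ := (hv.1 0).mpr rfl
  have hX : (X - C a).comp (X + C a) = X := by
    rw [sub_comp, X_comp, C_comp, add_sub_cancel_right]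
  unfold MV.Om MV.Wv
  rw [hX, natDegree_X]
  rw [show range 2 = {0, 1} by rfl]
  simp [coeff_X, hv0, hv.2.1]

lemma MV.Om_mono {δ γ : Λ} (hd : δ ≤ γ) (a : K) (f : Polynomial K) :
    MV.Om v a δ f ≤ MV.Om v a γ f := by
  unfold MV.Om MV.Wv
  refine Finset.inf_mono_fun fun s _ => ?_
  exact add_le_add_right (WithTop.coe_le_coe.mpr (nsmul_le_nsmul_right hd s)) _

end Om

lemma MV.classify (v : K → WithTop Λ) (hv : IsVal v) (a : K) {δ γ : Λ} (hdg : δ ≤ γ)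
    {ρ : Polynomial K → WithTop Λ} (hρ : ExtVal v ρ)
    (hd : ρ (X - C a) = (δ : WithTop Λ))
    (hle : ∀ f, ρ f ≤ MV.Om v a γ f) :
    ρ = MV.Om v a δ := by
  classical
  obtain ⟨hvt, hv1, hvm, hva⟩ := hv
  have hv0 : v 0 = ⊤ := (hvt 0).mpr rfl
  obtain ⟨hrm, hra, hrC⟩ := hρ
  have hr0 : ρ 0 = ⊤ := by rw [← Polynomial.C_0, hrC, hv0]
  have hr1 : ρ 1 = 0 := by rw [← Polynomial.C_1, hrC, hv1]
  have hrpow : ∀ s : ℕ, ρ ((X - C a) ^ s) = ↑(s • δ) := by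
    intro s
    rw [MV.wpow hrm hr1, hd, WithTop.coe_nsmul]
  -- lower bound
  have hlow : ∀ f, MV.Om v a δ f ≤ ρ f := by
    intro f
    conv_rhs => rw [MV.expand a f]
    refine MV.w_sum_ge' hra hr0 fun s _ => ?_
    rw [hrm, hrC, hrpow]
    exact MV.Wv_le_coeff v δ hv0 (f.comp (X + C a)) s
  -- upper bound
  have hup : ∀ f, ρ f ≤ MV.Om v a δ f := by
    intro f
    by_contra hcon
    push_neg at hcon
    set g := f.comp (X + C a) with hg
    set m := MV.Om v a δ f with hm
    have hmWv : m = MV.Wv v δ g := rfl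
    have hfne : f ≠ 0 := by
      rintro rfl
      have h0 : MV.Om v a δ 0 = ⊤ := by
        show MV.Wv v δ ((0 : Polynomial K).comp (X + C a)) = ⊤
        rw [zero_comp]; exact MV.Wv_zero v δ hv0
      rw [← hm] at h0
      rw [h0] at hcon
      exact not_top_lt hcon
    have hgne : g ≠ 0 := by
      intro h
      apply hfne
      rw [← MV.comp_comp a f, ← hg, h, zero_comp]
    have hmne : m ≠ ⊤ := by rw [hmWv]; exact MV.Wv_ne_top v δ hv0 hvt hgne
    set P : ℕ → Prop := fun s => v (g.coeff s) + ↑(s • δ) = m with hP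
    obtain ⟨i, hPi, himin⟩ := MV.exists_minimal (p := P) (by
      obtain ⟨i0, h0⟩ := MV.Wv_exists v δ g
      exact ⟨i0, by rw [hP]; rw [← hmWv] at h0; exact h0⟩)
    set d := g.natDegree with hdd
    have hPhigh : ∀ t, d + 1 ≤ t → ¬ P t := by
      intro t ht hPt
      rw [hP] at hPt
      rw [coeff_eq_zero_of_natDegree_lt (by omega : g.natDegree < t), hv0, top_add] at hPt
      exact hmne hPt.symm
    set b' : ℕ → K := fun s => if P (s + i) then g.coeff (s + i) else 0 with hb'
    set h := ∑ s ∈ range (d + 1), C (b' s) * (X - C a) ^ s with hh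
    set F : ℕ → Polynomial K := fun t => C (if P t then g.coeff t else 0) * (X - C a) ^ t with hF
    set f₀ := ∑ s ∈ range (d + 1), F s with hf₀
    set f₁ := ∑ s ∈ range (d + 1), C (if P s then 0 else g.coeff s) * (X - C a) ^ s with hf₁
    have hFlow : ∀ t, t < i → F t = 0 := by
      intro t ht
      rw [hF]; simp only [if_neg (himin t ht), map_zero, zero_mul]
    have hFhigh : ∀ t, d + 1 ≤ t → F t = 0 := by
      intro t ht
      rw [hF]; simp only [if_neg (hPhigh t ht), map_zero, zero_mul]
    -- f₀ + f₁ = f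
    have hsum : f₀ + f₁ = f := by
      rw [hf₀, hf₁, ← Finset.sum_add_distrib]
      conv_rhs => rw [MV.expand a f]
      refine Finset.sum_congr rfl fun s _ => ?_
      simp only [hF]
      by_cases hPs : P s
      · simp only [if_pos hPs, if_neg (not_not_intro hPs), map_zero, zero_mul, add_zero]; rfl
      · simp only [if_neg hPs, map_zero, zero_mul, zero_add]; rfl
    -- f₀ = (X - C a)^i * h
    have hfac : f₀ = (X - C a) ^ i * h := by
      have e1 : f₀ = ∑ t ∈ range (i + (d + 1)), F t := by
        rw [hf₀]
        refine Finset.sum_subset (Finset.range_subset_range.mpr (by omega)) ?_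
        intro t _ ht
        exact hFhigh t (Nat.le_of_not_lt (fun hlt => ht (Finset.mem_range.mpr hlt)))
      have e2 : (X - C a) ^ i * h = ∑ s ∈ range (d + 1), F (i + s) := by
        rw [hh, Finset.mul_sum]
        refine Finset.sum_congr rfl fun s _ => ?_
        rw [Nat.add_comm i s]
        simp only [hF, hb']
        rw [pow_add]
        ring
      rw [e1, e2, Finset.sum_range_add]
      rw [Finset.sum_eq_zero (fun t ht => hFlow t (Finset.mem_range.mp ht)), zero_add]
    -- ρ f₁ > m
    have hf1gt : m < ρ f₁ := by
      rw [hf₁]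
      refine MV.w_sum_gt hra hr0 hmne fun s hs => ?_
      by_cases hPs : P s
      · rw [if_pos hPs, map_zero, zero_mul, hr0]
        exact lt_top_iff_ne_top.mpr hmne
      · rw [if_neg hPs, hrm, hrC, hrpow]
        refine lt_of_le_of_ne ?_ (fun heq => hPs ?_)
        · rw [hmWv]; exact MV.Wv_le_coeff v δ hv0 g s
        · rw [hP]; exact heq.symm
    -- ρ f₀ > m
    have hf0gt : m < ρ f₀ := by
      have he : f₀ = f + (-f₁) := by rw [← hsum]; ring
      rw [he]
      calc m < min (ρ f) (ρ (-f₁)) := by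
            rw [MV.wneg hrm hr1, lt_min_iff]; exact ⟨hcon, hf1gt⟩
        _ ≤ ρ (f + -f₁) := hra _ _
    have hr_f0 : ρ f₀ = ↑(i • δ) + ρ h := by
      rw [hfac, hrm, hrpow]
    have hPi' : v (g.coeff i) + ↑(i • δ) = m := hPi
    have hhgt : v (g.coeff i) < ρ h := by
      have h1 : ↑(i • δ) + v (g.coeff i) < ↑(i • δ) + ρ h := by
        rw [add_comm (↑(i • δ) : WithTop Λ) (v (g.coeff i)), hPi', ← hr_f0]
        exact hf0gt
      exact (WithTop.add_lt_add_iff_left WithTop.coe_ne_top).mp h1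
    have hOmh : MV.Om v a γ h = v (g.coeff i) := by
      rw [MV.Om_spec v hv0 a γ h (d + 1) b' hh]
      refine le_antisymm ?_ (Finset.le_inf fun s _ => ?_)
      · calc (range (d+1)).inf (fun s => v (b' s) + s • (↑γ : WithTop Λ))
            ≤ v (b' 0) + (0 : ℕ) • (↑γ : WithTop Λ) := Finset.inf_le (by simp)
          _ = v (g.coeff i) := by
              simp only [hb', zero_add, if_pos hPi, zero_smul, add_zero]
      · simp only [hb']
        by_cases hPs : P (s + i)
        · rw [if_pos hPs]
          have hcancel : v (g.coeff (s + i)) + ↑(s • δ) = v (g.coeff i) := by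
            apply WithTop.add_right_cancel (z := (↑(i • δ) : WithTop Λ)) WithTop.coe_ne_top
            rw [add_assoc, ← WithTop.coe_add, ← add_nsmul]
            rw [show v (g.coeff (s + i)) + ↑((s + i) • δ) = m from hPs, hPi']
          calc v (g.coeff i) = v (g.coeff (s + i)) + ↑(s • δ) := hcancel.symm
            _ ≤ v (g.coeff (s + i)) + s • (↑γ : WithTop Λ) := by
                rw [← WithTop.coe_nsmul]
                exact add_le_add_right (WithTop.coe_le_coe.mpr (nsmul_le_nsmul_right hdg s)) _
        · rw [if_neg hPs, hv0, top_add]; exact le_top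
    exact absurd (hle h) (not_le.mpr (by rw [hOmh]; exact hhgt))
  funext f
  exact le_antisymm (hup f) (hlow f)


/-- `ω_{a,γ}` (for `γ ∈ Λ`) is a valuation on `K[x]` extending `v`,
and the valuations strictly below it are exactly the `ω_{a,δ}` with `δ < γ`. -/
theorem depthZero_valuation_and_lowerSet (v : K → WithTop Λ) (hv : IsVal v)
    (a : K) (γ : Λ) (ω : Polynomial K → WithTop Λ)
    (hω : DepthZeroVal v a (γ : WithTop Λ) ω) :
    ExtVal v ω ∧
      {ρ : Polynomial K → WithTop Λ | ExtVal v ρ ∧ (∀ f, ρ f ≤ ω f) ∧ ρ ≠ ω} =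
        {ρ : Polynomial K → WithTop Λ | ∃ δ : Λ, δ < γ ∧ DepthZeroVal v a (δ : WithTop Λ) ρ} := by
  have hv0 : v 0 = ⊤ := (hv.1 0).mpr rfl
  have hωeq : ω = MV.Om v a γ := MV.depthZero_eq v hv0 hω
  subst hωeq
  constructor
  · exact MV.Om_extVal v hv a γ
  · ext ρ
    simp only [Set.mem_setOf_eq]
    constructor
    · rintro ⟨hρ, hle, hne⟩
      have hd' : ρ (X - C a) ≤ (γ : WithTop Λ) := le_of_le_of_eq (hle _) (MV.Om_linear v hv a γ)
      have ht : ρ (X - C a) ≠ ⊤ := fun h => by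
        rw [h, top_le_iff] at hd'; exact WithTop.coe_ne_top hd'
      obtain ⟨δ, hδ⟩ := WithTop.ne_top_iff_exists.mp ht
      have hδγ : δ ≤ γ := by
        rw [← hδ] at hd'; exact_mod_cast hd'
      have hcls := MV.classify v hv a hδγ hρ hδ.symm hle
      refine ⟨δ, ?_, ?_⟩
      · rcases lt_or_eq_of_le hδγ with hlt | rfl
        · exact hlt
        · exact absurd hcls hne
      · rw [hcls]; exact MV.Om_spec v hv0 a δ
    · rintro ⟨δ, hδγ, hρ⟩
      have heq : ρ = MV.Om v a δ := MV.depthZero_eq v hv0 hρ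
      subst heq
      refine ⟨MV.Om_extVal v hv a δ, fun f => MV.Om_mono v hδγ.le a f, fun h => ?_⟩
      have h1 := congrFun h (X - C a)
      rw [MV.Om_linear v hv a δ, MV.Om_linear v hv a γ] at h1
      exact absurd (WithTop.coe_injective h1) (ne_of_lt hδγ)
end

section
/- Let 𝒜 = (ρ_i)_{i∈A} be a totally ordered family of Λ∞-valued valuations on K[x] extending v (ρ_i < ρ_j for i < j in the totally ordered index set A). If every polynomial f ∈ K[x] is 𝒜-stable (its values ρ_i(f) are eventually constant), then the stability function ρ_𝒜(f) := eventual value of ρ_i(f) is a valuation on K[x] extending v. -/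
open Polynomial Finset

variable {K : Type*} [Field K] {Λ : Type*} [AddCommGroup Λ] [LinearOrder Λ] [IsOrderedAddMonoid Λ]

/-- if every polynomial is stable for a totally ordered family of
valuations extending `v`, then the stability function `ρ_𝒜` is a valuation on
`K[x]` extending `v`. -/
theorem stable_limit_is_valuation (v : K → WithTop Λ)
    {A : Type*} [LinearOrder A] (ρ : A → Polynomial K → WithTop Λ)
    (hv : IsVal v) (hval : ∀ i, ExtVal v (ρ i))
    (hmono : ∀ i j : A, i ≤ j → ∀ f, ρ i f ≤ ρ j f)
    (hstrict : ∀ i j : A, i < j → ρ i ≠ ρ j)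
    (ρA : Polynomial K → WithTop Λ)
    (hlim : ∀ f : Polynomial K, ∃ i₀ : A, ∀ i, i₀ ≤ i → ρ i f = ρA f) :
    ExtVal v ρA := by
  refine ⟨?_, ?_, ?_⟩
  · intro f g
    obtain ⟨i₁, h₁⟩ := hlim f
    obtain ⟨i₂, h₂⟩ := hlim g
    obtain ⟨i₃, h₃⟩ := hlim (f * g)
    set i := max (max i₁ i₂) i₃
    rw [← h₁ i (le_trans (le_max_left _ _) (le_max_left _ _)),
      ← h₂ i (le_trans (le_max_right _ _) (le_max_left _ _)),
      ← h₃ i (le_max_right _ _)]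
    exact (hval i).1 f g
  · intro f g
    obtain ⟨i₁, h₁⟩ := hlim f
    obtain ⟨i₂, h₂⟩ := hlim g
    obtain ⟨i₃, h₃⟩ := hlim (f + g)
    set i := max (max i₁ i₂) i₃
    rw [← h₁ i (le_trans (le_max_left _ _) (le_max_left _ _)),
      ← h₂ i (le_trans (le_max_right _ _) (le_max_left _ _)),
      ← h₃ i (le_max_right _ _)]
    exact (hval i).2.1 f g
  · intro a
    obtain ⟨i, hi⟩ := hlim (Polynomial.C a)
    rw [← hi i le_rfl]
    exact (hval i).2.2 a
end

section
/- Let 𝒜 = (ρ_i)_{i∈A} be a totally ordered family of valuations on K[x]. Then the set of 𝒜-stable polynomials is closed under multiplication, and ρ_𝒜(fg) = ρ_𝒜(f) + ρ_𝒜(g) for stable f, g. Consequently, any monic unstable polynomial of minimal degree among unstable polynomials is irreducible in K[x]. -/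
open Polynomial Finset

variable {K : Type*} [Field K] {Λ : Type*} [AddCommGroup Λ] [LinearOrder Λ] [IsOrderedAddMonoid Λ]

/-- `f` is 𝒜-stable for the family `ρ`: its values are eventually constant. -/
def AStable {A : Type*} [LinearOrder A] (ρ : A → Polynomial K → WithTop Λ)
    (f : Polynomial K) : Prop :=
  ∃ i₀ : A, ∀ i, i₀ ≤ i → ρ i f = ρ i₀ f

/-- stable polynomials are closed under multiplication with
`ρ_𝒜(fg) = ρ_𝒜(f) + ρ_𝒜(g)`; consequently a monic unstable polynomial of minimal
degree among unstable polynomials is irreducible in `K[x]`. -/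
theorem stable_mul_and_irreducible (v : K → WithTop Λ)
    {A : Type*} [LinearOrder A] (ρ : A → Polynomial K → WithTop Λ)
    (hv : IsVal v) (hval : ∀ i, ExtVal v (ρ i))
    (hmono : ∀ i j : A, i ≤ j → ∀ f, ρ i f ≤ ρ j f) :
    (∀ f g : Polynomial K, AStable ρ f → AStable ρ g → AStable ρ (f * g)) ∧
    (∀ (f g : Polynomial K) (i₀ j₀ : A),
        (∀ i, i₀ ≤ i → ρ i f = ρ i₀ f) → (∀ j, j₀ ≤ j → ρ j g = ρ j₀ g) →
        ∃ k₀ : A, ∀ k, k₀ ≤ k → ρ k (f * g) = ρ i₀ f + ρ j₀ g) ∧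
    (∀ φ : Polynomial K, φ.Monic → ¬ AStable ρ φ →
        (∀ ψ : Polynomial K, ¬ AStable ρ ψ → φ.degree ≤ ψ.degree) →
        Irreducible φ) := by
  have hmul : ∀ (k : A) f g, ρ k (f * g) = ρ k f + ρ k g := fun k => (hval k).1
  have key : ∀ (f g : Polynomial K) (i₀ j₀ : A),
      (∀ i, i₀ ≤ i → ρ i f = ρ i₀ f) → (∀ j, j₀ ≤ j → ρ j g = ρ j₀ g) →
      ∃ k₀ : A, ∀ k, k₀ ≤ k → ρ k (f * g) = ρ i₀ f + ρ j₀ g := by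
    intro f g i₀ j₀ hi hj
    exact ⟨max i₀ j₀, fun k hk => by
      rw [hmul, hi k (le_trans (le_max_left _ _) hk),
        hj k (le_trans (le_max_right _ _) hk)]⟩
  refine ⟨?_, key, ?_⟩
  · rintro f g ⟨i₀, hi⟩ ⟨j₀, hj⟩
    obtain ⟨k₀, hk⟩ := key f g i₀ j₀ hi hj
    exact ⟨k₀, fun k h => by rw [hk k h, hk k₀ le_rfl]⟩
  · intro φ hmonic hunst hmin
    rcases isEmpty_or_nonempty A with hA | hA
    · exfalso
      have h0 : ¬ AStable ρ (0 : Polynomial K) := by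
        rintro ⟨i₀, -⟩; exact hA.false i₀
      have := hmin 0 h0
      rw [Polynomial.degree_zero, le_bot_iff, Polynomial.degree_eq_bot] at this
      exact hmonic.ne_zero this
    · obtain ⟨i⟩ := hA
      have hstable_small : ∀ ψ : Polynomial K, ψ.degree < φ.degree → AStable ρ ψ := by
        intro ψ hψ
        by_contra h
        exact absurd hψ (not_lt.mpr (hmin ψ h))
      have hCstable : ∀ c : K, AStable ρ (Polynomial.C c) :=
        fun c => ⟨i, fun j _ => by rw [(hval j).2.2, (hval i).2.2]⟩
      have hdeg : 0 < φ.natDegree := by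
        by_contra h
        push_neg at h
        have h0 : φ.natDegree = 0 := Nat.le_zero.mp h
        have : φ = Polynomial.C (φ.coeff 0) := Polynomial.eq_C_of_natDegree_eq_zero h0
        exact hunst (this ▸ hCstable _)
      constructor
      · intro hu
        have := Polynomial.natDegree_eq_zero_of_isUnit hu
        omega
      · intro a b hab
        by_contra h
        push_neg at h
        obtain ⟨ha, hb⟩ := h
        have ha0 : a ≠ 0 := by rintro rfl; rw [zero_mul] at hab; exact hmonic.ne_zero hab
        have hb0 : b ≠ 0 := by rintro rfl; rw [mul_zero] at hab; exact hmonic.ne_zero hab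
        have hna : 0 < a.natDegree := by
          rcases Nat.eq_zero_or_pos a.natDegree with h0 | h0
          · exfalso
            have := Polynomial.eq_C_of_natDegree_eq_zero h0
            apply ha
            rw [this]
            exact Polynomial.isUnit_C.mpr (isUnit_iff_ne_zero.mpr (by
              intro hc; apply ha0; rw [this, hc, map_zero]))
          · exact h0
        have hnb : 0 < b.natDegree := by
          rcases Nat.eq_zero_or_pos b.natDegree with h0 | h0
          · exfalso
            have := Polynomial.eq_C_of_natDegree_eq_zero h0
            apply hb
            rw [this]
            exact Polynomial.isUnit_C.mpr (isUnit_iff_ne_zero.mpr (by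
              intro hc; apply hb0; rw [this, hc, map_zero]))
          · exact h0
        have hsum : φ.natDegree = a.natDegree + b.natDegree := by
          rw [hab, Polynomial.natDegree_mul ha0 hb0]
        have hda : a.degree < φ.degree :=
          Polynomial.degree_lt_degree (by omega)
        have hdb : b.degree < φ.degree :=
          Polynomial.degree_lt_degree (by omega)
        obtain ⟨ia, hia⟩ := hstable_small a hda
        obtain ⟨ib, hib⟩ := hstable_small b hdb
        obtain ⟨k₀, hk⟩ := key a b ia ib hia hib
        exact hunst ⟨k₀, fun k h => by rw [hab] at *; rw [hk k h, hk k₀ le_rfl]⟩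
end

section
/- Let μ < ν be valuations on K[x] with values in a common ordered group, and let φ be a monic polynomial of minimal degree with μ(φ) < ν(φ). Then the augmented valuation ρ = [μ; φ, ν(φ)] satisfies μ < ρ ≤ ν. -/
open Polynomial Finset

variable {K : Type*} [Field K] {Λ : Type*} [AddCommGroup Λ] [LinearOrder Λ] [IsOrderedAddMonoid Λ]

/-- if `μ < ν` and `φ` is monic of minimal degree with `μ(φ) < ν(φ)`,
then the augmented valuation `ρ = [μ; φ, ν(φ)]` satisfies `μ < ρ ≤ ν`. -/
theorem augmentation_between (v : K → WithTop Λ)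
    (μ ν : Polynomial K → WithTop Λ) (hv : IsVal v)
    (hμ : ExtVal v μ) (hν : ExtVal v ν)
    (hle : ∀ f : Polynomial K, μ f ≤ ν f) (hne : μ ≠ ν)
    (φ : Polynomial K) (hmonic : φ.Monic) (hφ : μ φ < ν φ)
    (hmin : ∀ g : Polynomial K, g.Monic → μ g < ν g → φ.degree ≤ g.degree)
    (ρ : Polynomial K → WithTop Λ) (haug : AugVal μ φ (ν φ) ρ) :
    (∀ f : Polynomial K, μ f ≤ ρ f) ∧ μ ≠ ρ ∧ (∀ f : Polynomial K, ρ f ≤ ν f) := by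
  obtain ⟨hv0, hv1, hvmul, hvadd⟩ := hv
  obtain ⟨hμmul, hμadd, hμC⟩ := hμ
  obtain ⟨hνmul, hνadd, hνC⟩ := hν
  have hμ0 : μ 0 = ⊤ := by rw [← Polynomial.C_0, hμC]; exact (hv0 0).mpr rfl
  have hν0 : ν 0 = ⊤ := by rw [← Polynomial.C_0, hνC]; exact (hv0 0).mpr rfl
  have hμ1 : μ 1 = 0 := by rw [← Polynomial.C_1, hμC, hv1]
  have hν1 : ν 1 = 0 := by rw [← Polynomial.C_1, hνC, hv1]
  -- v (-1) = 0
  have hvm1 : v (-1) = 0 := by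
    have h2 : v (-1) + v (-1) = 0 := by
      rw [← hvmul]; norm_num [hv1]
    have hnet : v (-1) ≠ ⊤ := by
      intro ht; rw [ht] at h2; simp at h2
    lift v (-1) to Λ using hnet with c hc
    have hcc : c + c = 0 := by exact_mod_cast h2
    have hc0 : c = 0 := by
      rcases lt_trichotomy c 0 with h | h | h
      · exact absurd hcc (ne_of_lt (by simpa using add_lt_add h h))
      · exact h
      · exact absurd hcc (ne_of_gt (by simpa using add_lt_add h h))
    simp [hc0]
  have hμneg : ∀ f, μ (-f) = μ f := by
    intro f
    have h : (-f) = Polynomial.C (-1) * f := by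
      rw [map_neg, Polynomial.C_1, neg_one_mul]
    rw [h, hμmul, hμC, hvm1, zero_add]
  have hνneg : ∀ f, ν (-f) = ν f := by
    intro f
    have h : (-f) = Polynomial.C (-1) * f := by
      rw [map_neg, Polynomial.C_1, neg_one_mul]
    rw [h, hνmul, hνC, hvm1, zero_add]
  -- μ = ν on degrees below deg φ
  have hsmall : ∀ h : Polynomial K, h.degree < φ.degree → μ h = ν h := by
    intro h hdeg
    rcases eq_or_ne h 0 with rfl | hne0
    · rw [hμ0, hν0]
    · have hmon := Polynomial.monic_mul_leadingCoeff_inv hne0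
      have hdeg1 : (h * Polynomial.C h.leadingCoeff⁻¹).degree = h.degree :=
        Polynomial.degree_mul_leadingCoeff_inv h hne0
      have h1eq : μ (h * Polynomial.C h.leadingCoeff⁻¹) = ν (h * Polynomial.C h.leadingCoeff⁻¹) := by
        rcases lt_or_eq_of_le (hle (h * Polynomial.C h.leadingCoeff⁻¹)) with hlt | heq
        · exact absurd (hmin _ hmon hlt) (by rw [hdeg1]; exact not_le.mpr hdeg)
        · exact heq
      have hrec : h = h * Polynomial.C h.leadingCoeff⁻¹ * Polynomial.C h.leadingCoeff := by
        rw [mul_assoc, ← Polynomial.C_mul,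
          inv_mul_cancel₀ (Polynomial.leadingCoeff_ne_zero.mpr hne0), Polynomial.C_1, mul_one]
      conv_lhs => rw [hrec]
      conv_rhs => rw [hrec]
      rw [hμmul, hνmul, hμC, hνC, h1eq]
  -- Key Lemma: μ (a + φ g) ≤ μ a  for deg a < deg φ
  have hK : ∀ a g : Polynomial K, a.degree < φ.degree → μ (a + φ * g) ≤ μ a := by
    intro a g hdeg
    by_contra hcon
    push_neg at hcon
    set f := a + φ * g with hf
    have hane : μ a ≠ ⊤ := hcon.ne_top
    have h1 : min (μ f) (μ (φ * g)) ≤ μ a := by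
      have h := hμadd f (-(φ * g))
      rw [show f + -(φ * g) = a by rw [hf]; ring, hμneg] at h
      exact h
    have h2 : μ (φ * g) ≤ μ a := by
      by_contra hc
      push_neg at hc
      exact absurd h1 (not_le.mpr (lt_min hcon hc))
    have h3 : μ a ≤ μ (φ * g) := by
      have h := hμadd f (-a)
      rw [show f + -a = φ * g by rw [hf]; ring, hμneg] at h
      rwa [min_eq_right hcon.le] at h
    have heq : μ φ + μ g = μ a := by rw [← hμmul]; exact le_antisymm h2 h3
    have hgne : μ g ≠ ⊤ := by
      intro ht; rw [ht, add_top] at heq; exact hane heq.symm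
    have hνa : ν a = μ a := (hsmall a hdeg).symm
    have hlt : ν a < ν (φ * g) := by
      rw [hνa, ← heq, hνmul]
      calc μ φ + μ g < ν φ + μ g := WithTop.add_lt_add_right hgne hφ
        _ ≤ ν φ + ν g := add_le_add_right (hle g) _
    have h5 : ν f ≤ ν a := by
      have h := hνadd f (-(φ * g))
      rw [show f + -(φ * g) = a by rw [hf]; ring, hνneg] at h
      by_contra hc
      push_neg at hc
      exact absurd h (not_le.mpr (lt_min hc hlt))
    exact absurd hcon (not_lt.mpr ((hle f).trans (h5.trans hνa.le)))
  -- Corollary: μ (a + φ g) ≤ μ (φ g)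
  have hK2 : ∀ a g : Polynomial K, a.degree < φ.degree → μ (a + φ * g) ≤ μ (φ * g) := by
    intro a g hdeg
    rcases le_or_gt (μ (a + φ * g)) (μ (φ * g)) with h | h
    · exact h
    · exfalso
      set f := a + φ * g with hf
      have hKa : μ f ≤ μ a := hK a g hdeg
      have hmin' : min (μ f) (μ a) ≤ μ (φ * g) := by
        have h' := hμadd f (-a)
        rw [show f + -a = φ * g by rw [hf]; ring, hμneg] at h'
        exact h'
      exact absurd hmin' (not_le.mpr (lt_min h (lt_of_lt_of_le h hKa)))
  -- ν of powers
  have hνpow : ∀ s : ℕ, ν (φ ^ s) = s • ν φ := by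
    intro s; induction s with
    | zero => simpa using hν1
    | succ n ih => rw [pow_succ, hνmul, ih, succ_nsmul]
  -- main upper bound: μ f ≤ inf over any expansion
  have hmain : ∀ (n : ℕ) (a : ℕ → Polynomial K) (f : Polynomial K),
      (∀ s, (a s).degree < φ.degree) → f = ∑ s ∈ Finset.range n, a s * φ ^ s →
      μ f ≤ (Finset.range n).inf (fun s => μ (a s) + s • ν φ) := by
    intro n
    induction n with
    | zero =>
      intro a f _ hf
      simp only [Finset.range_zero, Finset.sum_empty] at hf
      simp [hf, hμ0]
    | succ n ih =>
      intro a f ha hf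
      set g := ∑ s ∈ Finset.range n, a (s + 1) * φ ^ s with hg
      have hfg : f = a 0 + φ * g := by
        rw [hf, Finset.sum_range_succ', pow_zero, mul_one, add_comm, hg, Finset.mul_sum]
        congr 1
        refine Finset.sum_congr rfl fun s _ => ?_
        ring
      have hgle := ih (fun s => a (s + 1)) g (fun s => ha (s + 1)) hg
      apply Finset.le_inf
      intro s hs
      cases s with
      | zero =>
        simpa using hfg ▸ hK (a 0) g (ha 0)
      | succ t =>
        have ht : t ∈ Finset.range n := by
          rw [Finset.mem_range] at hs ⊢; omega
        have h1 : μ f ≤ μ φ + μ g := by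
          rw [← hμmul]; exact hfg ▸ hK2 (a 0) g (ha 0)
        have h2 : μ g ≤ μ (a (t + 1)) + t • ν φ := le_trans hgle (Finset.inf_le ht)
        calc μ f ≤ μ φ + μ g := h1
          _ ≤ ν φ + (μ (a (t + 1)) + t • ν φ) := add_le_add hφ.le h2
          _ = μ (a (t + 1)) + (t + 1) • ν φ := by
              rw [succ_nsmul, ← add_assoc, add_comm (ν φ) (μ (a (t + 1))), add_assoc,
                add_comm (ν φ) (t • ν φ)]
  -- superadditivity for sums
  have hsum_inf : ∀ (n : ℕ) (t : ℕ → Polynomial K),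
      (Finset.range n).inf (fun s => ν (t s)) ≤ ν (∑ s ∈ Finset.range n, t s) := by
    intro n t
    induction n with
    | zero => simp [hν0]
    | succ n ih =>
      rw [Finset.sum_range_succ, Finset.range_add_one, Finset.inf_insert]
      exact le_trans (le_min (le_trans (min_le_right _ _) ih) (min_le_left _ _)) (hνadd _ _)
  have hρle : ∀ (f : Polynomial K) (n : ℕ) (a : ℕ → Polynomial K),
      (∀ s, (a s).degree < φ.degree) → f = ∑ s ∈ Finset.range n, a s * φ ^ s →
      (Finset.range n).inf (fun s => μ (a s) + s • ν φ) ≤ ν f := by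
    intro f n a ha hf
    rw [hf]
    refine le_trans (le_of_eq ?_) (hsum_inf n _)
    refine Finset.inf_congr rfl fun s _ => ?_
    rw [hνmul, hνpow, hsmall (a s) (ha s)]
  -- degree of φ is positive
  have hφ1 : φ ≠ 1 := by
    rintro rfl; rw [hμ1, hν1] at hφ; exact lt_irrefl _ hφ
  have hdegφ : 0 < φ.degree := by
    rcases lt_or_ge 0 φ.degree with h | h
    · exact h
    · exact absurd (hmonic.natDegree_eq_zero.mp
        (Polynomial.natDegree_eq_zero_iff_degree_le_zero.mpr h)) hφ1
  have hbotlt : (⊥ : WithBot ℕ) < φ.degree := lt_trans (by exact WithBot.bot_lt_coe 0) hdegφ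
  -- existence of φ-expansions
  have hexp : ∀ f : Polynomial K, ∃ (n : ℕ) (a : ℕ → Polynomial K),
      (∀ s, (a s).degree < φ.degree) ∧ f = ∑ s ∈ Finset.range n, a s * φ ^ s := by
    have hsingle : ∀ f : Polynomial K, f.degree < φ.degree → ∃ (n : ℕ) (a : ℕ → Polynomial K),
        (∀ s, (a s).degree < φ.degree) ∧ f = ∑ s ∈ Finset.range n, a s * φ ^ s := by
      intro f hdeg
      refine ⟨1, fun s => if s = 0 then f else 0, fun s => ?_, by simp⟩
      by_cases h : s = 0
      · simpa [h] using hdeg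
      · simpa [h, Polynomial.degree_zero] using hbotlt
    have key : ∀ (N : ℕ) (f : Polynomial K), f.natDegree ≤ N → ∃ (n : ℕ) (a : ℕ → Polynomial K),
        (∀ s, (a s).degree < φ.degree) ∧ f = ∑ s ∈ Finset.range n, a s * φ ^ s := by
      intro N
      induction N with
      | zero =>
        intro f hf
        refine hsingle f (lt_of_le_of_lt ?_ hdegφ)
        exact le_trans Polynomial.degree_le_natDegree (by exact_mod_cast Nat.cast_le.mpr hf)
      | succ N ih =>
        intro f hf
        by_cases hdeg : f.degree < φ.degree
        · exact hsingle f hdeg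
        · have hnd : 0 < φ.natDegree := Polynomial.natDegree_pos_iff_degree_pos.mpr hdegφ
          have hq : (f /ₘ φ).natDegree ≤ N := by
            rw [Polynomial.natDegree_divByMonic f hmonic]; omega
          obtain ⟨n, a, ha, hsum⟩ := ih (f /ₘ φ) hq
          refine ⟨n + 1, fun s => Nat.rec (f %ₘ φ) (fun t _ => a t) s, fun s => ?_, ?_⟩
          · cases s with
            | zero => exact Polynomial.degree_modByMonic_lt f hmonic
            | succ t => exact ha t
          · rw [Finset.sum_range_succ', pow_zero, mul_one]
            have hstep : (∑ s ∈ Finset.range n,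
                (Nat.rec (f %ₘ φ) (fun t _ => a t) (s + 1) : Polynomial K) * φ ^ (s + 1))
                = φ * (f /ₘ φ) := by
              rw [hsum, Finset.mul_sum]
              refine Finset.sum_congr rfl fun s _ => ?_
              show a s * φ ^ (s + 1) = φ * (a s * φ ^ s)
              ring
            rw [hstep, add_comm]
            exact (Polynomial.modByMonic_add_div f φ).symm
    intro f; exact key f.natDegree f le_rfl
  refine ⟨?_, ?_, ?_⟩
  · intro f
    obtain ⟨n, a, ha, hf⟩ := hexp f
    rw [haug f n a ha hf]
    exact hmain n a f ha hf
  · intro hcontra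
    have hφeq : φ = ∑ s ∈ Finset.range 2,
        (fun s => if s = 1 then (1 : Polynomial K) else 0) s * φ ^ s := by
      simp [Finset.sum_range_succ]
    have hdegs : ∀ s, (((fun s => if s = 1 then (1 : Polynomial K) else 0) s)).degree < φ.degree := by
      intro s
      by_cases h : s = 1
      · simpa [h, Polynomial.degree_one] using hdegφ
      · simpa [h, Polynomial.degree_zero] using hbotlt
    have hρφ : ρ φ = ν φ := by
      rw [haug φ 2 _ hdegs hφeq]
      rw [show Finset.range 2 = {0, 1} by rfl]
      simp [hμ0, hμ1, one_nsmul]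
    rw [hcontra, hρφ] at hφ
    exact lt_irrefl _ hφ
  · intro f
    obtain ⟨n, a, ha, hf⟩ := hexp f
    rw [haug f n a ha hf]
    exact hρle f n a ha hf
end

section
/- Let μ < ν be valuations on K[x] and φ a monic polynomial of minimal degree with μ(φ) < ν(φ). Then the kernel of the canonical graded-algebra homomorphism gr_μ(K[x]) → gr_ν(K[x]) (sending in_μ f to in_ν f if μ(f)=ν(f) and to 0 otherwise) is the principal prime ideal generated by in_μ(φ). -/
open Polynomial Finset

variable {K : Type*} [Field K] {Λ : Type*} [AddCommGroup Λ] [LinearOrder Λ] [IsOrderedAddMonoid Λ]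

private lemma aux_two_eq_zero {Λ : Type*} [AddCommGroup Λ] [LinearOrder Λ] [IsOrderedAddMonoid Λ]
    {a : WithTop Λ} (h : a + a = 0) : a = 0 := by
  cases a with
  | top => simp at h
  | coe a =>
    have h' : a + a = 0 := by exact_mod_cast h
    have : a = 0 := by
      rcases lt_trichotomy a 0 with hl | hl | hl
      · have := add_lt_add hl hl
        rw [h', add_zero] at this
        exact absurd this (lt_irrefl 0)
      · exact hl
      · have := add_lt_add hl hl
        rw [h', add_zero] at this
        exact absurd this (lt_irrefl 0)
    exact_mod_cast congrArg (fun x : Λ => (x : WithTop Λ)) this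

/-- the kernel of the canonical graded homomorphism
`gr_μ(K[x]) → gr_ν(K[x])` is the principal prime ideal generated by `in_μ φ`.
Stated on homogeneous elements: a nonzero `in_μ f` is in the kernel iff
`μ(f) < ν(f)` iff `φ ∣_μ f`; and the ideal `(in_μ φ)` is prime and proper. -/
theorem kernel_eq_prime_ideal (v : K → WithTop Λ)
    (μ ν : Polynomial K → WithTop Λ) (hv : IsVal v)
    (hμ : ExtVal v μ) (hν : ExtVal v ν)
    (hle : ∀ f : Polynomial K, μ f ≤ ν f) (hne : μ ≠ ν)
    (φ : Polynomial K) (hmonic : φ.Monic) (hφ : μ φ < ν φ)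
    (hmin : ∀ g : Polynomial K, g.Monic → μ g < ν g → φ.degree ≤ g.degree) :
    (∀ f : Polynomial K, f ≠ 0 → μ f ≠ ⊤ → (μ f < ν f ↔ MuDvd μ φ f)) ∧
      (∀ f g : Polynomial K, MuDvd μ φ (f * g) → MuDvd μ φ f ∨ MuDvd μ φ g) ∧
      ¬ MuDvd μ φ 1 := by
  obtain ⟨hv0, hv1, hvmul, hvadd⟩ := hv
  obtain ⟨hμmul, hμadd, hμC⟩ := hμ
  obtain ⟨hνmul, hνadd, hνC⟩ := hν
  have hμ0 : μ 0 = ⊤ := by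
    rw [← Polynomial.C_0, hμC]; exact (hv0 0).mpr rfl
  have hμ1 : μ 1 = 0 := by rw [← Polynomial.C_1, hμC]; exact hv1
  have hν1 : ν 1 = 0 := by rw [← Polynomial.C_1, hνC]; exact hv1
  have hvneg1 : v (-1) = 0 := by
    have h := hvmul (-1) (-1)
    rw [neg_mul_neg, one_mul, hv1] at h
    exact aux_two_eq_zero h.symm
  have hμneg : ∀ f, μ (-f) = μ f := by
    intro f
    have h : -f = Polynomial.C (-1) * f := by
      rw [map_neg, Polynomial.C_1, neg_mul, one_mul]
    rw [h, hμmul, hμC, hvneg1, zero_add]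
  have hμsub : ∀ f g, min (μ f) (μ g) ≤ μ (f - g) := by
    intro f g
    have h := hμadd f (-g)
    rw [hμneg g] at h
    simpa [sub_eq_add_neg] using h
  have hνneg : ∀ f, ν (-f) = ν f := by
    intro f
    have h : -f = Polynomial.C (-1) * f := by
      rw [map_neg, Polynomial.C_1, neg_mul, one_mul]
    rw [h, hνmul, hνC, hvneg1, zero_add]
  have hνsub : ∀ f g, min (ν f) (ν g) ≤ ν (f - g) := by
    intro f g
    have h := hνadd f (-g)
    rw [hνneg g] at h
    simpa [sub_eq_add_neg] using h
  -- ultrametric equality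
  have hμeq : ∀ a b, μ a < μ b → μ (a + b) = μ a := by
    intro a b h
    have h1 : μ a ≤ μ (a + b) := le_trans (le_min le_rfl h.le) (hμadd a b)
    have h2 : min (μ (a + b)) (μ b) ≤ μ a := by
      have h3 := hμsub (a + b) b
      simpa using h3
    rcases min_le_iff.mp h2 with h3 | h3
    · exact le_antisymm h3 h1
    · exact absurd h3 (not_le.mpr h)
  have hνtop_of : ∀ f, μ f = ⊤ → ν f = ⊤ := fun f h => top_le_iff.mp (h ▸ hle f)
  -- polynomials of degree < deg φ have equal value
  have hsmall : ∀ g : Polynomial K, g ≠ 0 → g.degree < φ.degree → μ g = ν g := by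
    intro g hg hdeg
    set c := g.leadingCoeff with hc
    have hc0 : c ≠ 0 := Polynomial.leadingCoeff_ne_zero.mpr hg
    have hmonic' : (g * Polynomial.C c⁻¹).Monic :=
      Polynomial.monic_mul_leadingCoeff_inv hg
    have hdeg' : (g * Polynomial.C c⁻¹).degree = g.degree := by
      rw [Polynomial.degree_mul, Polynomial.degree_C (inv_ne_zero hc0), add_zero]
    have heq : μ (g * Polynomial.C c⁻¹) = ν (g * Polynomial.C c⁻¹) := by
      by_contra hcon
      have hlt : μ (g * Polynomial.C c⁻¹) < ν (g * Polynomial.C c⁻¹) :=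
        lt_of_le_of_ne (hle _) hcon
      have h4 := hmin _ hmonic' hlt
      rw [hdeg'] at h4
      exact absurd hdeg (not_lt.mpr h4)
    have hgrw : g = (g * Polynomial.C c⁻¹) * Polynomial.C c := by
      rw [mul_assoc, ← Polynomial.C_mul, inv_mul_cancel₀ hc0, Polynomial.C_1, mul_one]
    rw [hgrw, hμmul, hνmul, hμC, hνC, heq]
  -- reverse direction: μ-divisibility forces value increase
  have hrev : ∀ f : Polynomial K, μ f ≠ ⊤ → MuDvd μ φ f → μ f < ν f := by
    rintro f hft ⟨q, hq⟩
    have h1 : μ f < ν (f - q * φ) := lt_of_lt_of_le hq (hle _)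
    have h2 : μ f < ν (q * φ) := by
      by_cases hq0 : μ (q * φ) = ⊤
      · rw [hνtop_of _ hq0]; exact lt_of_le_of_ne le_top hft
      · have hqt : μ q ≠ ⊤ := fun h => hq0 (by rw [hμmul, h, top_add])
        have h3 : μ f ≤ μ (q * φ) := by
          have h4 := hμsub f (f - q * φ)
          rw [sub_sub_cancel] at h4
          calc μ f = min (μ f) (μ (f - q * φ)) := (min_eq_left hq.le).symm
            _ ≤ μ (q * φ) := h4
        have h4 : μ (q * φ) < ν (q * φ) := by
          rw [hμmul, hνmul]
          calc μ q + μ φ < μ q + ν φ := WithTop.add_lt_add_left hqt hφ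
            _ ≤ ν q + ν φ := add_le_add_left (hle q) _
        exact lt_of_le_of_lt h3 h4
    have h5 : min (ν (f - q * φ)) (ν (q * φ)) ≤ ν f := by
      have h6 := hνadd (f - q * φ) (q * φ)
      rwa [sub_add_cancel] at h6
    exact lt_of_lt_of_le (lt_min h1 h2) h5
  -- forward direction via Euclidean division
  have hfwd : ∀ f : Polynomial K, μ f ≠ ⊤ → μ f < ν f → MuDvd μ φ f := by
    intro f hft hlt
    refine ⟨f /ₘ φ, ?_⟩
    set q := f /ₘ φ with hqdef
    set r := f %ₘ φ with hrdef
    have hfq : f - q * φ = r := by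
      have h := Polynomial.modByMonic_add_div f φ
      rw [hqdef, hrdef]
      linear_combination -Polynomial.modByMonic_add_div f φ
    rw [hfq]
    by_contra hcon
    push_neg at hcon
    have hrt : μ r ≠ ⊤ := fun h => hft (top_le_iff.mp (h ▸ hcon))
    have hr0 : r ≠ 0 := fun h => hrt (by rw [h, hμ0])
    have hrdeg : r.degree < φ.degree := Polynomial.degree_modByMonic_lt f hmonic
    have hreq : μ r = ν r := hsmall r hr0 hrdeg
    have h5 : min (ν f) (ν (q * φ)) ≤ ν r := by
      have h6 := hνsub f (q * φ)
      rwa [hfq] at h6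
    rcases min_le_iff.mp h5 with h6 | h6
    · exact absurd (lt_of_lt_of_le hlt (h6.trans hreq.ge)) (not_lt.mpr hcon)
    · by_cases hq0 : μ (q * φ) = ⊤
      · exact hrt (top_le_iff.mp ((hνtop_of _ hq0) ▸ (h6.trans hreq.ge)))
      · have hqt : μ q ≠ ⊤ := fun h => hq0 (by rw [hμmul, h, top_add])
        have h7 : μ (q * φ) < ν (q * φ) := by
          rw [hμmul, hνmul]
          calc μ q + μ φ < μ q + ν φ := WithTop.add_lt_add_left hqt hφ
            _ ≤ ν q + ν φ := add_le_add_left (hle q) _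
        have h8 : μ (q * φ) < μ r := lt_of_lt_of_le h7 (h6.trans hreq.ge)
        have h9 : μ f = μ (q * φ) := by
          have h10 : f = q * φ + r := by rw [← hfq]; ring
          rw [h10]; exact hμeq _ _ h8
        exact absurd (h9 ▸ h8) (not_lt.mpr hcon)
  -- assemble
  have hnot1 : ¬ MuDvd μ φ 1 := by
    intro h
    have h1 := hrev 1 (by rw [hμ1]; exact (WithTop.zero_ne_top)) h
    rw [hμ1, hν1] at h1
    exact lt_irrefl _ h1
  refine ⟨fun f hf hft => ⟨hfwd f hft, hrev f hft⟩, ?_, hnot1⟩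
  rintro f g ⟨q, hq⟩
  have hfgt : μ (f * g) ≠ ⊤ := fun h => absurd (h ▸ hq) not_top_lt
  have hft : μ f ≠ ⊤ := fun h => hfgt (by rw [hμmul, h, top_add])
  have hgt : μ g ≠ ⊤ := fun h => hfgt (by rw [hμmul, h, add_top])
  have hlt : μ (f * g) < ν (f * g) := hrev _ hfgt ⟨q, hq⟩
  rw [hμmul, hνmul] at hlt
  by_contra hcon
  push_neg at hcon
  have h1 : μ f = ν f := by
    by_contra h; exact hcon.1 (hfwd f hft (lt_of_le_of_ne (hle f) h))
  have h2 : μ g = ν g := by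
    by_contra h; exact hcon.2 (hfwd g hgt (lt_of_le_of_ne (hle g) h))
  rw [h1, h2] at hlt
  exact lt_irrefl _ hlt
end
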